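/- arXiv:1110.2269 — 2 statements merged into one kernel-verified Lean document; each statement's English description precedes it below -/
import Mathlib

section
/- Let E be a k-coloured graph and C a complete, associative collection of squares in E. For every finite path x in E there is a unique C-compatible coloured-graph morphism λ_x: E_{k, q(c(x))} → E such that x traverses λ_x. -/
namespace Paper


/-- A `k`-coloured (directed) graph. -/
structure ColouredGraph (k : ℕ) where
  V : Type
  E : Type
  r : E → V
  s : E → V
  c : E → Fin k

variable {k : ℕ}

/-- The model grid `E_{k,m}`: vertices `{n ≤ m}`, an edge of colour `i`
from `n + e_i` to `n` whenever `n + e_i ≤ m`. -/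
def grid (k : ℕ) (m : Fin k → ℕ) : ColouredGraph k where
  V := {n : Fin k → ℕ // n ≤ m}
  E := {p : (Fin k → ℕ) × Fin k // p.1 + Pi.single p.2 1 ≤ m}
  r e := ⟨e.1.1, le_trans (le_add_of_nonneg_right zero_le) e.2⟩
  s e := ⟨e.1.1 + Pi.single e.1.2 1, e.2⟩
  c e := e.1.2

/-- A coloured-graph morphism. -/
structure CGM (E F : ColouredGraph k) where
  onV : E.V → F.V
  onE : E.E → F.E
  r_comm : ∀ e, F.r (onE e) = onV (E.r e)
  s_comm : ∀ e, F.s (onE e) = onV (E.s e)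
  c_comm : ∀ e, F.c (onE e) = E.c e

/-- Composition of coloured-graph morphisms. -/
def CGM.compose {E F G : ColouredGraph k} (g : CGM F G) (f : CGM E F) : CGM E G where
  onV := g.onV ∘ f.onV
  onE := g.onE ∘ f.onE
  r_comm e := by simp [Function.comp, g.r_comm, f.r_comm]
  s_comm e := by simp [Function.comp, g.s_comm, f.s_comm]
  c_comm e := by simp [Function.comp, g.c_comm, f.c_comm]

/-- The range `λ(0)` of a coloured-graph morphism defined on a grid. -/
def gRng {E : ColouredGraph k} {m : Fin k → ℕ} (lam : CGM (grid k m) E) : E.V :=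
  lam.onV ⟨0, zero_le⟩

/-- The source `λ(m)` of a coloured-graph morphism defined on a grid. -/
def gSrc {E : ColouredGraph k} {m : Fin k → ℕ} (lam : CGM (grid k m) E) : E.V :=
  lam.onV ⟨m, le_refl m⟩

/-- The translated restriction `λ|*_{[p, p+m']}` of `λ : E_{k,M} → E`. -/
def restrictTo {E : ColouredGraph k} {M : Fin k → ℕ} (lam : CGM (grid k M) E)
    (p m' : Fin k → ℕ) (h : p + m' ≤ M) : CGM (grid k m') E where
  onV n := lam.onV ⟨p + n.1, le_trans (add_le_add (le_refl p) n.2) h⟩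
  onE e := lam.onE ⟨(p + e.1.1, e.1.2), by
    rw [add_assoc]; exact le_trans (add_le_add (le_refl p) e.2) h⟩
  r_comm e := lam.r_comm _
  s_comm e := by
    exact (lam.s_comm _).trans (congrArg lam.onV (Subtype.ext (add_assoc p e.1.1 _)))
  c_comm e := lam.c_comm _

/-- A coloured-graph morphism from some grid into `E`, bundled with its degree. -/
def MorphOf (E : ColouredGraph k) : Type := Σ m : Fin k → ℕ, CGM (grid k m) E

/-- The shape (abelianized colouring) of a finite path, as an element of `ℕ^k`. -/
def colourVec (E : ColouredGraph k) (x : List E.E) : Fin k → ℕ :=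
  (x.map (fun e => Pi.single (E.c e) 1)).sum

/-- A list of edges is a path when consecutive edges are composable. -/
def IsPathList (E : ColouredGraph k) (x : List E.E) : Prop :=
  x.Chain' (fun e f => E.s e = E.r f)

/-- `x` traverses `λ`: the edges of `x` match those of `λ` along the staircase
determined by the colour sequence of `x`. -/
def Traverses {E : ColouredGraph k} {m : Fin k → ℕ} (lam : CGM (grid k m) E)
    (x : List E.E) : Prop :=
  colourVec E x = m ∧ ∀ (l : ℕ) (hl : l < x.length),
    ∃ h : colourVec E (x.take l) + Pi.single (E.c (x.get ⟨l, hl⟩)) 1 ≤ m,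
      lam.onE ⟨(colourVec E (x.take l), E.c (x.get ⟨l, hl⟩)), h⟩ = x.get ⟨l, hl⟩

/-- A bundled grid morphism is a square when its degree is `e_i + e_j` with `i ≠ j`. -/
def IsSquarePair {E : ColouredGraph k} (φ : MorphOf E) : Prop :=
  ∃ i j : Fin k, i ≠ j ∧ φ.1 = Pi.single i 1 + Pi.single j 1

/-- A complete collection of squares. -/
def Complete (E : ColouredGraph k) (C : Set (MorphOf E)) : Prop :=
  (∀ φ ∈ C, IsSquarePair φ) ∧
  ∀ e f : E.E, E.s e = E.r f → E.c e ≠ E.c f →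
    ∃! φ : MorphOf E, φ ∈ C ∧ Traverses φ.2 [e, f]

/-- `CRel C e f f' e'` means `ef ∼_C f'e'`: the paths `ef` and `f'e'` traverse a
common square of `C`, with `f'` of the colour of `f` and `e'` of the colour of `e`. -/
def CRel (E : ColouredGraph k) (C : Set (MorphOf E)) (e f f' e' : E.E) : Prop :=
  E.c f' = E.c f ∧ E.c e' = E.c e ∧
  ∃ φ ∈ C, Traverses φ.2 [e, f] ∧ Traverses φ.2 [f', e']

/-- Associativity of a complete collection of squares. -/
def Associative (E : ColouredGraph k) (C : Set (MorphOf E)) : Prop :=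
  ∀ f g h f1 f2 g1 g2 h1 h2 f1' f2' g1' g2' h1' h2' : E.E,
    E.s f = E.r g → E.s g = E.r h →
    E.c f ≠ E.c g → E.c g ≠ E.c h → E.c f ≠ E.c h →
    CRel E C f g g1' f1' → CRel E C f1' h h1' f2' → CRel E C g1' h1' h2' g2' →
    CRel E C g h h1 g1 → CRel E C f h1 h2 f1 → CRel E C f1 g1 g2 f2 →
    f2 = f2' ∧ g2 = g2' ∧ h2 = h2'

/-- `λ` is `C`-compatible: every square occurring in `λ` belongs to `C`. -/
def CComp (E : ColouredGraph k) (C : Set (MorphOf E)) {M : Fin k → ℕ}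
    (lam : CGM (grid k M) E) : Prop :=
  ∀ (p : Fin k → ℕ) (i j : Fin k), i ≠ j →
    ∀ h : p + (Pi.single i 1 + Pi.single j 1) ≤ M,
      (⟨Pi.single i 1 + Pi.single j 1,
        restrictTo lam p (Pi.single i 1 + Pi.single j 1) h⟩ : MorphOf E) ∈ C

/-- A finite path in a coloured graph, remembering its range vertex (so that
length-zero paths are vertices). -/
structure FinPath (E : ColouredGraph k) where
  rng : E.V
  edges : List E.E
  chain : edges.Chain' (fun e f => E.s e = E.r f)
  head_rng : ∀ e ∈ edges.head?, E.r e = rng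

/-- Source vertex of a finite path. -/
def FinPath.src {E : ColouredGraph k} (x : FinPath E) : E.V :=
  (x.edges.getLast?).elim x.rng E.s

/-- One application of a commuting square: replace a consecutive bicoloured pair
by its `C`-equivalent pair. -/
def SwapStep (E : ColouredGraph k) (C : Set (MorphOf E)) (x y : List E.E) : Prop :=
  ∃ (l r : List E.E) (e f f' e' : E.E),
    x = l ++ e :: f :: r ∧ y = l ++ f' :: e' :: r ∧ CRel E C e f f' e'

/-- The relation on finite paths generating the equivalence `∼`. -/
def PathRel (E : ColouredGraph k) (C : Set (MorphOf E)) (x y : FinPath E) : Prop :=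
  x.rng = y.rng ∧ SwapStep E C x.edges y.edges

section Helpers

variable {E : ColouredGraph k}

local notation "δ" => fun (j : Fin k) => (Pi.single j 1 : Fin k → ℕ)

theorem CGM.ext' {F G : ColouredGraph k} {f g : CGM F G}
    (hV : f.onV = g.onV) (hE : f.onE = g.onE) : f = g := by
  cases f; cases g; cases hV; cases hE; rfl

theorem onE_congr {M : Fin k → ℕ} (f : CGM (grid k M) E)
    {p p' : Fin k → ℕ} {c c' : Fin k} {h h'}
    (hp : p = p') (hc : c = c') :
    f.onE ⟨(p, c), h⟩ = f.onE ⟨(p', c'), h'⟩ := by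
  subst hp; subst hc; rfl

theorem onV_congr {M : Fin k → ℕ} (f : CGM (grid k M) E)
    {p p' : Fin k → ℕ} {h h'} (hp : p = p') :
    f.onV ⟨p, h⟩ = f.onV ⟨p', h'⟩ := by
  subst hp; rfl

theorem c_comm' {M : Fin k → ℕ} (lam : CGM (grid k M) E) {p : Fin k → ℕ}
    {c : Fin k} {h} : E.c (lam.onE ⟨(p, c), h⟩) = c := lam.c_comm _

theorem r_comm' {M : Fin k → ℕ} (lam : CGM (grid k M) E) {p : Fin k → ℕ}
    {c : Fin k} {h} (h' : p ≤ M) :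
    E.r (lam.onE ⟨(p, c), h⟩) = lam.onV ⟨p, h'⟩ :=
  (lam.r_comm _).trans (onV_congr _ rfl)

theorem s_comm' {M : Fin k → ℕ} (lam : CGM (grid k M) E) {p : Fin k → ℕ}
    {c : Fin k} {h} (h' : p + Pi.single c 1 ≤ M) :
    E.s (lam.onE ⟨(p, c), h⟩) = lam.onV ⟨p + Pi.single c 1, h'⟩ :=
  (lam.s_comm _).trans (onV_congr _ rfl)

theorem colourVec_nil : colourVec E [] = 0 := rfl

theorem colourVec_cons (a : E.E) (l : List E.E) :
    colourVec E (a :: l) = Pi.single (E.c a) 1 + colourVec E l := by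
  simp [colourVec]

theorem colourVec_pair (a b : E.E) :
    colourVec E [a, b] = Pi.single (E.c a) 1 + Pi.single (E.c b) 1 := by
  simp [colourVec]

theorem heq_onE {m m' : Fin k → ℕ} (h : m = m')
    {f : CGM (grid k m) E} {g : CGM (grid k m') E} (hf : HEq f g)
    (p : Fin k → ℕ) (c : Fin k) (h1 : p + Pi.single c 1 ≤ m) :
    ∃ h2, f.onE ⟨(p, c), h1⟩ = g.onE ⟨(p, c), h2⟩ := by
  subst h; exact ⟨h1, by rw [eq_of_heq hf]⟩

theorem heq_onV {m m' : Fin k → ℕ} (h : m = m')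
    {f : CGM (grid k m) E} {g : CGM (grid k m') E} (hf : HEq f g)
    (p : Fin k → ℕ) (h1 : p ≤ m) :
    ∃ h2, f.onV ⟨p, h1⟩ = g.onV ⟨p, h2⟩ := by
  subst h; exact ⟨h1, by rw [eq_of_heq hf]⟩

theorem traverses_pair_iff {M : Fin k → ℕ} (lam : CGM (grid k M) E) (a b : E.E) :
    Traverses lam [a, b] ↔
      (Pi.single (E.c a) 1 + Pi.single (E.c b) 1 = M) ∧
      (∃ h, lam.onE ⟨(0, E.c a), h⟩ = a) ∧
      (∃ h, lam.onE ⟨(Pi.single (E.c a) 1, E.c b), h⟩ = b) := by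
  constructor
  · rintro ⟨h1, h2⟩
    rw [colourVec_pair] at h1
    refine ⟨h1, ?_, ?_⟩
    · obtain ⟨h, he⟩ := h2 0 (by norm_num)
      exact ⟨h, he⟩
    · obtain ⟨h, he⟩ := h2 1 (by norm_num)
      simp only [List.take, colourVec_cons, colourVec_nil, add_zero] at h he
      exact ⟨h, he⟩
  · rintro ⟨h1, ⟨ha, hea⟩, ⟨hb, heb⟩⟩
    refine ⟨by rw [colourVec_pair, h1], ?_⟩
    intro l hl
    have hl2 : l < 2 := by simpa using hl
    interval_cases l
    · exact ⟨ha, hea⟩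
    · simp only [List.take, colourVec_cons, colourVec_nil, add_zero]
      exact ⟨hb, heb⟩

end Helpers
section Swap

variable {E : ColouredGraph k} {C : Set (MorphOf E)}

theorem swap_exists (hC : Complete E C) {a b : E.E}
    (h1 : E.s a = E.r b) (h2 : E.c a ≠ E.c b) :
    ∃ (b' a' : E.E) (φ : MorphOf E), φ ∈ C ∧ Traverses φ.2 [a, b] ∧
      Traverses φ.2 [b', a'] ∧ E.c b' = E.c b ∧ E.c a' = E.c a ∧
      E.r b' = E.r a ∧ E.s b' = E.r a' ∧ E.s a' = E.s b := by
  obtain ⟨φ, ⟨hφC, hφT⟩, -⟩ := hC.2 a b h1 h2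
  obtain ⟨hM, ⟨hpa, ea⟩, ⟨hpb, eb⟩⟩ := (traverses_pair_iff φ.2 a b).1 hφT
  have hb' : (0 : Fin k → ℕ) + Pi.single (E.c b) 1 ≤ φ.1 := by
    rw [← hM, zero_add]; exact le_add_self
  have hbp : Pi.single (E.c b) 1 ≤ φ.1 := by rw [← hM]; exact le_add_self
  have ha' : Pi.single (E.c b) 1 + Pi.single (E.c a) 1 ≤ φ.1 :=
    le_of_eq (by rw [add_comm, hM])
  refine ⟨φ.2.onE ⟨(0, E.c b), hb'⟩, φ.2.onE ⟨(Pi.single (E.c b) 1, E.c a), ha'⟩,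
    φ, hφC, hφT, ?_, c_comm' _, c_comm' _, ?_, ?_, ?_⟩
  · rw [traverses_pair_iff]
    refine ⟨by rw [c_comm', c_comm', add_comm, hM], ⟨?_, ?_⟩, ⟨?_, ?_⟩⟩
    · rw [c_comm']; exact hb'
    · exact onE_congr _ rfl (c_comm' _)
    · rw [c_comm', c_comm']; exact ha'
    · exact onE_congr _ (by rw [c_comm']) (c_comm' _)
  · rw [r_comm' _ zero_le, ← ea, r_comm' _ zero_le]
  · rw [s_comm' _ hb', r_comm' _ hbp]; exact onV_congr _ (zero_add _)
  · have h3 := s_comm' φ.2 (h := hpb) (le_of_eq hM)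
    rw [eb] at h3
    rw [s_comm' _ ha', h3]; exact onV_congr _ (add_comm _ _)

noncomputable def swapB (hC : Complete E C) {a b : E.E}
    (h1 : E.s a = E.r b) (h2 : E.c a ≠ E.c b) : E.E :=
  (swap_exists hC h1 h2).choose

noncomputable def swapA (hC : Complete E C) {a b : E.E}
    (h1 : E.s a = E.r b) (h2 : E.c a ≠ E.c b) : E.E :=
  (swap_exists hC h1 h2).choose_spec.choose

noncomputable def swapSq (hC : Complete E C) {a b : E.E}
    (h1 : E.s a = E.r b) (h2 : E.c a ≠ E.c b) : MorphOf E :=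
  (swap_exists hC h1 h2).choose_spec.choose_spec.choose

theorem swap_spec (hC : Complete E C) {a b : E.E}
    (h1 : E.s a = E.r b) (h2 : E.c a ≠ E.c b) :
    swapSq hC h1 h2 ∈ C ∧ Traverses (swapSq hC h1 h2).2 [a, b] ∧
      Traverses (swapSq hC h1 h2).2 [swapB hC h1 h2, swapA hC h1 h2] ∧
      E.c (swapB hC h1 h2) = E.c b ∧ E.c (swapA hC h1 h2) = E.c a ∧
      E.r (swapB hC h1 h2) = E.r a ∧
      E.s (swapB hC h1 h2) = E.r (swapA hC h1 h2) ∧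
      E.s (swapA hC h1 h2) = E.s b :=
  (swap_exists hC h1 h2).choose_spec.choose_spec.choose_spec

theorem swap_crel (hC : Complete E C) {a b : E.E}
    (h1 : E.s a = E.r b) (h2 : E.c a ≠ E.c b) :
    CRel E C a b (swapB hC h1 h2) (swapA hC h1 h2) := by
  obtain ⟨hc, ht1, ht2, hcb, hca, -⟩ := swap_spec hC h1 h2
  exact ⟨hcb, hca, _, hc, ht1, ht2⟩

theorem swap_unique (hC : Complete E C) {a b b1 a1 : E.E}
    (h1 : E.s a = E.r b) (h2 : E.c a ≠ E.c b)
    (h : CRel E C a b b1 a1) : b1 = swapB hC h1 h2 ∧ a1 = swapA hC h1 h2 := by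
  obtain ⟨hcb1, hca1, ψ, hψC, t1, t2⟩ := h
  obtain ⟨hφC, ht1, ht2, hcB, hcA, -⟩ := swap_spec hC h1 h2
  have hψφ : ψ = swapSq hC h1 h2 :=
    (hC.2 a b h1 h2).unique ⟨hψC, t1⟩ ⟨hφC, ht1⟩
  subst hψφ
  obtain ⟨-, ⟨hb1, eb1⟩, ⟨ha1, ea1⟩⟩ := (traverses_pair_iff _ b1 a1).1 t2
  obtain ⟨-, ⟨hB, eB⟩, ⟨hA, eA⟩⟩ :=
    (traverses_pair_iff _ (swapB hC h1 h2) (swapA hC h1 h2)).1 ht2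
  constructor
  · rw [← eb1, ← eB]; exact onE_congr _ rfl (by rw [hcb1, hcB])
  · rw [← ea1, ← eA]
    exact onE_congr _ (by rw [hcb1, hcB]) (by rw [hca1, hcA])

theorem ccomp_crel {M : Fin k → ℕ} {lam : CGM (grid k M) E}
    (hcc : CComp E C lam) {p : Fin k → ℕ} {a b : Fin k}
    (hab : a ≠ b) (h : p + (Pi.single a 1 + Pi.single b 1) ≤ M)
    (ha : p + Pi.single a 1 ≤ M) (hab2 : (p + Pi.single a 1) + Pi.single b 1 ≤ M)
    (hb : p + Pi.single b 1 ≤ M) (hba2 : (p + Pi.single b 1) + Pi.single a 1 ≤ M) :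
    CRel E C (lam.onE ⟨(p, a), ha⟩) (lam.onE ⟨(p + Pi.single a 1, b), hab2⟩)
      (lam.onE ⟨(p, b), hb⟩) (lam.onE ⟨(p + Pi.single b 1, a), hba2⟩) := by
  refine ⟨by rw [c_comm', c_comm'], by rw [c_comm', c_comm'],
    ⟨Pi.single a 1 + Pi.single b 1, restrictTo lam p _ h⟩, hcc p a b hab h, ?_, ?_⟩
  · rw [traverses_pair_iff]
    refine ⟨by rw [c_comm', c_comm'], ⟨?_, ?_⟩, ⟨?_, ?_⟩⟩
    · rw [c_comm', zero_add]; exact le_self_add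
    · simp only [restrictTo]; exact onE_congr _ (add_zero p) (c_comm' _)
    · rw [c_comm', c_comm']
    · simp only [restrictTo]; refine onE_congr _ ?_ (c_comm' _); rw [c_comm']
  · rw [traverses_pair_iff]
    refine ⟨by rw [c_comm', c_comm', add_comm], ⟨?_, ?_⟩, ⟨?_, ?_⟩⟩
    · rw [c_comm', zero_add]; exact le_add_self
    · simp only [restrictTo]; exact onE_congr _ (add_zero p) (c_comm' _)
    · rw [c_comm', c_comm']; exact le_of_eq (add_comm _ _)
    · simp only [restrictTo]; refine onE_congr _ ?_ (c_comm' _); rw [c_comm']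

end Swap
section StepDefs

variable {E : ColouredGraph k} {C : Set (MorphOf E)}

theorem pi_le {a b : Fin k → ℕ} (h : ∀ l, a l ≤ b l) : a ≤ b := h

theorem sub_single_add {n : Fin k → ℕ} {j : Fin k} (h : n j ≠ 0) :
    n - Pi.single j 1 + Pi.single j 1 = n := by
  funext l
  by_cases hl : l = j
  · subst hl; simp only [Pi.add_apply, Pi.sub_apply, Pi.single_eq_same]; omega
  · simp only [Pi.add_apply, Pi.sub_apply, Pi.single_eq_of_ne hl]; omega

theorem sub_single_le {n : Fin k → ℕ} {j : Fin k} : n - Pi.single j 1 ≤ n :=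
  pi_le fun l => Nat.sub_le _ _

theorem sum_sub_lt {n : Fin k → ℕ} {j : Fin k} (h : n j ≠ 0) :
    ∑ l, (n - Pi.single j 1 : Fin k → ℕ) l < ∑ l, n l := by
  refine Finset.sum_lt_sum (fun l _ => Nat.sub_le _ _) ⟨j, Finset.mem_univ j, ?_⟩
  simp only [Pi.sub_apply, Pi.single_eq_same]
  omega

/-- One nonzero coordinate exists. -/
theorem exists_ne_zero {n : Fin k → ℕ} (h : n ≠ 0) : ∃ j, n j ≠ 0 := by
  by_contra hc
  push_neg at hc
  exact h (funext fun l => hc l)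

/-- A choice of nonzero coordinate. -/
noncomputable def ch (n : Fin k → ℕ) (h : n ≠ 0) : Fin k :=
  (exists_ne_zero h).choose

theorem ch_spec (n : Fin k → ℕ) (h : n ≠ 0) : n (ch n h) ≠ 0 :=
  (exists_ne_zero h).choose_spec

/-- The context for the inductive step: a colour `i`, a `C`-compatible morphism
`lam'` on the grid of shape `m'`, and an edge `e` of colour `i` into the
range of `lam'`. -/
structure StepCtx (E : ColouredGraph k) (C : Set (MorphOf E)) where
  hC : Complete E C
  i : Fin k
  m' : Fin k → ℕ
  lam' : CGM (grid k m') E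
  hcc' : CComp E C lam'
  e : E.E
  hce : E.c e = i
  hse : E.s e = lam'.onV ⟨0, zero_le⟩

variable (S : StepCtx E C)

theorem StepCtx.h1 (p : Fin k → ℕ) (hp : p ≤ S.m') (A : E.E)
    (hAs : E.s A = S.lam'.onV ⟨p, hp⟩) (j : Fin k)
    (hb : p + Pi.single j 1 ≤ S.m') :
    E.s A = E.r (S.lam'.onE ⟨(p, j), hb⟩) :=
  hAs.trans (r_comm' S.lam' hp).symm

theorem StepCtx.h2 (A : E.E) (hAc : E.c A = S.i) {p : Fin k → ℕ} (j : Fin k)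
    (hji : j ≠ S.i) (hb : p + Pi.single j 1 ≤ S.m') :
    E.c A ≠ E.c (S.lam'.onE ⟨(p, j), hb⟩) := by
  rw [hAc, c_comm']; exact hji.symm

noncomputable def StepCtx.betaE (p : Fin k → ℕ) (hp : p ≤ S.m') (A : E.E)
    (hAc : E.c A = S.i) (hAs : E.s A = S.lam'.onV ⟨p, hp⟩) (j : Fin k)
    (hji : j ≠ S.i) (hb : p + Pi.single j 1 ≤ S.m') : E.E :=
  swapB S.hC (S.h1 p hp A hAs j hb) (S.h2 A hAc j hji hb)

noncomputable def StepCtx.gammaE (p : Fin k → ℕ) (hp : p ≤ S.m') (A : E.E)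
    (hAc : E.c A = S.i) (hAs : E.s A = S.lam'.onV ⟨p, hp⟩) (j : Fin k)
    (hji : j ≠ S.i) (hb : p + Pi.single j 1 ≤ S.m') : E.E :=
  swapA S.hC (S.h1 p hp A hAs j hb) (S.h2 A hAc j hji hb)

theorem StepCtx.beta_c (p hp A hAc hAs j hji hb) :
    E.c (S.betaE p hp A hAc hAs j hji hb) = j :=
  ((swap_spec S.hC _ _).2.2.2.1).trans (c_comm' _)

theorem StepCtx.gamma_c (p hp A hAc hAs j hji hb) :
    E.c (S.gammaE p hp A hAc hAs j hji hb) = S.i :=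
  ((swap_spec S.hC _ _).2.2.2.2.1).trans hAc

theorem StepCtx.beta_r (p hp A hAc hAs j hji hb) :
    E.r (S.betaE p hp A hAc hAs j hji hb) = E.r A :=
  (swap_spec S.hC _ _).2.2.2.2.2.1

theorem StepCtx.beta_s (p hp A hAc hAs j hji hb) :
    E.s (S.betaE p hp A hAc hAs j hji hb) =
      E.r (S.gammaE p hp A hAc hAs j hji hb) :=
  (swap_spec S.hC _ _).2.2.2.2.2.2.1

theorem StepCtx.gamma_s (p hp A hAc hAs j hji hb) :
    E.s (S.gammaE p hp A hAc hAs j hji hb) =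
      S.lam'.onV ⟨p + Pi.single j 1, hb⟩ :=
  ((swap_spec S.hC _ _).2.2.2.2.2.2.2).trans (s_comm' _ hb)

theorem StepCtx.bg_crel (p hp A hAc hAs j hji hb) :
    CRel E C A (S.lam'.onE ⟨(p, j), hb⟩) (S.betaE p hp A hAc hAs j hji hb)
      (S.gammaE p hp A hAc hAs j hji hb) :=
  swap_crel S.hC _ _

theorem StepCtx.bg_unique (p hp A hAc hAs j hji hb) {b1 a1 : E.E}
    (h : CRel E C A (S.lam'.onE ⟨(p, j), hb⟩) b1 a1) :
    b1 = S.betaE p hp A hAc hAs j hji hb ∧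
      a1 = S.gammaE p hp A hAc hAs j hji hb :=
  swap_unique S.hC _ _ h

/-- The `i`-coloured edges on the bottom slab, built recursively. -/
noncomputable def StepCtx.alpha (S : StepCtx E C) : (n : Fin k → ℕ) → (hn : n ≤ S.m') →
    (hni : n S.i = 0) → {a : E.E // E.c a = S.i ∧ E.s a = S.lam'.onV ⟨n, hn⟩} :=
  fun n hn hni =>
  if h : n = 0 then ⟨S.e, S.hce, S.hse.trans (onV_congr _ h.symm)⟩
  else
    have hj := ch_spec n h
    have hji : ch n h ≠ S.i := fun hq => hj (hq ▸ hni)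
    have hp : n - Pi.single (ch n h) 1 ≤ S.m' := le_trans sub_single_le hn
    have hpi : (n - Pi.single (ch n h) 1 : Fin k → ℕ) S.i = 0 := by
      have h5 : (n - Pi.single (ch n h) 1 : Fin k → ℕ) S.i = n S.i - (Pi.single (ch n h) 1 : Fin k → ℕ) S.i := rfl
      have h6 : (Pi.single (ch n h) 1 : Fin k → ℕ) S.i ≤ 1 := by
        simp only [Pi.single_apply]; split <;> omega
      omega
    have hb : (n - Pi.single (ch n h) 1) + Pi.single (ch n h) 1 ≤ S.m' := by
      rw [sub_single_add hj]; exact hn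
    let A := StepCtx.alpha S (n - Pi.single (ch n h) 1) hp hpi
    ⟨S.gammaE _ hp A.1 A.2.1 A.2.2 (ch n h) hji hb,
      S.gamma_c _ hp A.1 A.2.1 A.2.2 (ch n h) hji hb,
      (S.gamma_s _ hp A.1 A.2.1 A.2.2 (ch n h) hji hb).trans
        (onV_congr _ (sub_single_add hj))⟩
  termination_by n _ _ => ∑ l, n l
  decreasing_by exact sum_sub_lt (ch_spec n h)

end StepDefs
section SlabDefs

variable {E : ColouredGraph k} {C : Set (MorphOf E)}

theorem add_single_sub (n : Fin k → ℕ) (j : Fin k) :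
    (n + Pi.single j 1 : Fin k → ℕ) - Pi.single j 1 = n := by
  funext l
  by_cases hl : l = j
  · subst hl; simp only [Pi.sub_apply, Pi.add_apply, Pi.single_eq_same]; omega
  · simp only [Pi.sub_apply, Pi.add_apply, Pi.single_eq_of_ne hl]; omega

theorem sub_add_single_comm {n : Fin k → ℕ} {j j' : Fin k} (hjj : j ≠ j')
    (h : n j' ≠ 0) :
    (n + Pi.single j 1 : Fin k → ℕ) - Pi.single j' 1 =
      (n - Pi.single j' 1) + Pi.single j 1 := by
  funext l
  by_cases hl : l = j
  · subst hl
    simp only [Pi.sub_apply, Pi.add_apply, Pi.single_eq_same,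
      Pi.single_eq_of_ne hjj]
    omega
  · by_cases hl' : l = j'
    · subst hl'
      simp only [Pi.sub_apply, Pi.add_apply, Pi.single_eq_same,
        Pi.single_eq_of_ne hl]
      omega
    · simp only [Pi.sub_apply, Pi.add_apply, Pi.single_eq_of_ne hl,
        Pi.single_eq_of_ne hl']
      omega

theorem apply_add_single_ne {n : Fin k → ℕ} {j l : Fin k} (h : l ≠ j) :
    (n + Pi.single j 1 : Fin k → ℕ) l = n l := by
  simp only [Pi.add_apply, Pi.single_eq_of_ne h, add_zero]

theorem apply_add_single_self (n : Fin k → ℕ) (j : Fin k) :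
    (n + Pi.single j 1 : Fin k → ℕ) j = n j + 1 := by
  simp only [Pi.add_apply, Pi.single_eq_same]

theorem add_single_ne_zero (n : Fin k → ℕ) (j : Fin k) :
    (n + Pi.single j 1 : Fin k → ℕ) ≠ 0 := by
  intro hh
  have := congrFun hh j
  rw [apply_add_single_self] at this
  simp at this

theorem apply_sub_single {n : Fin k → ℕ} {j l : Fin k} :
    (n - Pi.single j 1 : Fin k → ℕ) l = n l - (Pi.single j 1 : Fin k → ℕ) l := rfl

variable (S : StepCtx E C)

/-- The slab edge of colour `j` at slab point `n`. -/
noncomputable def StepCtx.bet (n : Fin k → ℕ) (hn : n ≤ S.m') (hni : n S.i = 0)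
    (j : Fin k) (hji : j ≠ S.i) (hb : n + Pi.single j 1 ≤ S.m') : E.E :=
  S.betaE n hn (S.alpha n hn hni).1 (S.alpha n hn hni).2.1
    (S.alpha n hn hni).2.2 j hji hb

/-- The far `i`-edge of the square at slab point `n` in colour `j`. -/
noncomputable def StepCtx.gam (n : Fin k → ℕ) (hn : n ≤ S.m') (hni : n S.i = 0)
    (j : Fin k) (hji : j ≠ S.i) (hb : n + Pi.single j 1 ≤ S.m') : E.E :=
  S.gammaE n hn (S.alpha n hn hni).1 (S.alpha n hn hni).2.1
    (S.alpha n hn hni).2.2 j hji hb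

theorem StepCtx.bet_crel (n hn hni j hji hb) :
    CRel E C (S.alpha n hn hni).1 (S.lam'.onE ⟨(n, j), hb⟩)
      (S.bet n hn hni j hji hb) (S.gam n hn hni j hji hb) :=
  S.bg_crel _ _ _ _ _ _ _ _

theorem StepCtx.bet_c (n hn hni j hji hb) :
    E.c (S.bet n hn hni j hji hb) = j := S.beta_c _ _ _ _ _ _ _ _

theorem StepCtx.gam_c (n hn hni j hji hb) :
    E.c (S.gam n hn hni j hji hb) = S.i := S.gamma_c _ _ _ _ _ _ _ _

theorem StepCtx.bet_r (n hn hni j hji hb) :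
    E.r (S.bet n hn hni j hji hb) = E.r (S.alpha n hn hni).1 :=
  S.beta_r _ _ _ _ _ _ _ _

theorem StepCtx.bet_s (n hn hni j hji hb) :
    E.s (S.bet n hn hni j hji hb) = E.r (S.gam n hn hni j hji hb) :=
  S.beta_s _ _ _ _ _ _ _ _

theorem StepCtx.gam_s (n hn hni j hji hb) :
    E.s (S.gam n hn hni j hji hb) = S.lam'.onV ⟨n + Pi.single j 1, hb⟩ :=
  S.gamma_s _ _ _ _ _ _ _ _

theorem StepCtx.bet_unique (n hn hni j hji hb) {b1 a1 : E.E}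
    (h : CRel E C (S.alpha n hn hni).1 (S.lam'.onE ⟨(n, j), hb⟩) b1 a1) :
    b1 = S.bet n hn hni j hji hb ∧ a1 = S.gam n hn hni j hji hb :=
  S.bg_unique _ _ _ _ _ _ _ _ h

theorem StepCtx.gam_congr {p p' : Fin k → ℕ} (hpp : p = p') {j : Fin k}
    {hp hpi hp' hpi' hji hji' hb hb'} :
    S.gam p hp hpi j hji hb = S.gam p' hp' hpi' j hji' hb' := by
  subst hpp; rfl

theorem StepCtx.bet_congr {p p' : Fin k → ℕ} (hpp : p = p') {j : Fin k}
    {hp hpi hp' hpi' hji hji' hb hb'} :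
    S.bet p hp hpi j hji hb = S.bet p' hp' hpi' j hji' hb' := by
  subst hpp; rfl

theorem StepCtx.alpha_congr {p p' : Fin k → ℕ} (hpp : p = p')
    {hp hpi hp' hpi'} :
    (S.alpha p hp hpi).1 = (S.alpha p' hp' hpi').1 := by
  subst hpp; rfl

theorem StepCtx.alpha_zero (hn hni) : (S.alpha 0 hn hni).1 = S.e := by
  rw [StepCtx.alpha]
  simp

theorem StepCtx.alpha_ne (n : Fin k → ℕ) (hn : n ≤ S.m') (hni : n S.i = 0)
    (h : n ≠ 0) (hp hpi hji hb) :
    (S.alpha n hn hni).1 =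
      S.gam (n - Pi.single (ch n h) 1) hp hpi (ch n h) hji hb := by
  conv_lhs => rw [StepCtx.alpha]
  simp only [dif_neg h]
  rfl

end SlabDefs
section LemA

variable {E : ColouredGraph k} {C : Set (MorphOf E)}

theorem StepCtx.gam_congr' (S : StepCtx E C) {p p' : Fin k → ℕ} (hpp : p = p')
    {j j'' : Fin k} (hjj : j = j'') {hp hpi hp' hpi' hji hji' hb hb'} :
    S.gam p hp hpi j hji hb = S.gam p' hp' hpi' j'' hji' hb' := by
  subst hjj; subst hpp; rfl

/-- Key coherence: the far `i`-edge of the square at `(n, j)` is the canonical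
`i`-edge at `n + e_j`. -/
theorem StepCtx.lemA (S : StepCtx E C) (hA : Associative E C) :
    ∀ (N : ℕ) (n : Fin k → ℕ) (hn : n ≤ S.m') (hni : n S.i = 0) (j : Fin k)
      (hji : j ≠ S.i) (hb : n + Pi.single j 1 ≤ S.m')
      (hqn : (n + Pi.single j 1 : Fin k → ℕ) S.i = 0),
      (∑ l, n l) = N →
      S.gam n hn hni j hji hb = (S.alpha (n + Pi.single j 1) hb hqn).1 := by
  intro N
  induction N using Nat.strong_induction_on with
  | _ N IH =>
  intro n hn hni j hji hb hqn hN
  have hq0 : (n + Pi.single j 1 : Fin k → ℕ) ≠ 0 := add_single_ne_zero n j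
  have hchspec : (n + Pi.single j 1 : Fin k → ℕ) (ch _ hq0) ≠ 0 := ch_spec _ hq0
  have hj'i : ch _ hq0 ≠ S.i := fun hh => by rw [hh] at hchspec; exact hchspec hqn
  have hp : (n + Pi.single j 1 : Fin k → ℕ) - Pi.single (ch _ hq0) 1 ≤ S.m' :=
    le_trans sub_single_le hb
  have hpi : (n + Pi.single j 1 - Pi.single (ch _ hq0) 1 : Fin k → ℕ) S.i = 0 := by
    rw [apply_sub_single]; omega
  have hbq : (n + Pi.single j 1 - Pi.single (ch _ hq0) 1 : Fin k → ℕ) +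
      Pi.single (ch _ hq0) 1 ≤ S.m' := by
    rw [sub_single_add hchspec]; exact hb
  rw [S.alpha_ne _ hb hqn hq0 hp hpi hj'i hbq]
  rcases eq_or_ne (ch _ hq0) j with hcase | hcase
  · exact S.gam_congr' (by rw [hcase, add_single_sub]) hcase.symm
  · -- hexagon case
    have hnj' : n (ch _ hq0) ≠ 0 := by
      rwa [apply_add_single_ne hcase] at hchspec
    have hp0 : n - Pi.single (ch _ hq0) 1 ≤ S.m' := le_trans sub_single_le hn
    have hp0i : (n - Pi.single (ch _ hq0) 1 : Fin k → ℕ) S.i = 0 := by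
      rw [apply_sub_single]; omega
    have W2 : (n - Pi.single (ch _ hq0) 1) + Pi.single (ch _ hq0) 1 = n :=
      sub_single_add hnj'
    have hb1 : (n - Pi.single (ch _ hq0) 1) + Pi.single (ch _ hq0) 1 ≤ S.m' := by
      rw [W2]; exact hn
    have hbig : ((n - Pi.single (ch _ hq0) 1) + Pi.single (ch _ hq0) 1) +
        Pi.single j 1 ≤ S.m' := by rw [W2]; exact hb
    have hb2 : (n - Pi.single (ch _ hq0) 1) + Pi.single j 1 ≤ S.m' :=
      le_trans (add_le_add_left sub_single_le _) hb
    have hb3 : ((n - Pi.single (ch _ hq0) 1) + Pi.single j 1) +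
        Pi.single (ch _ hq0) 1 ≤ S.m' := by
      rw [add_right_comm]; exact hbig
    have hq_sub : (n + Pi.single j 1 - Pi.single (ch _ hq0) 1 : Fin k → ℕ) =
        (n - Pi.single (ch _ hq0) 1) + Pi.single j 1 :=
      sub_add_single_comm (Ne.symm hcase) hnj'
    have hx1 : ((n - Pi.single (ch _ hq0) 1) + Pi.single (ch _ hq0) 1 :
        Fin k → ℕ) S.i = 0 := by rw [W2]; exact hni
    have hx2 : ((n - Pi.single (ch _ hq0) 1) + Pi.single j 1 :
        Fin k → ℕ) S.i = 0 := by rw [← hq_sub, apply_sub_single]; omega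
    have hsum : ∑ l, (n - Pi.single (ch _ hq0) 1 : Fin k → ℕ) l < N :=
      hN ▸ sum_sub_lt hnj'
    -- inductive hypotheses
    have A1 := IH _ hsum _ hp0 hp0i _ hj'i hb1 hx1 rfl
    have A1' : S.gam _ hp0 hp0i _ hj'i hb1 = (S.alpha n hn hni).1 :=
      A1.trans (S.alpha_congr W2)
    have A2 := IH _ hsum _ hp0 hp0i j hji hb2 hx2 rfl
    -- the six CRels
    have r1 := S.bet_crel _ hp0 hp0i _ hj'i hb1
    have r2 := S.bet_crel n hn hni j hji hb
    rw [← A1'] at r2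
    have he : S.lam'.onE ⟨(n, j), hb⟩ =
        S.lam'.onE ⟨((n - Pi.single (ch _ hq0) 1) + Pi.single (ch _ hq0) 1, j),
          hbig⟩ := onE_congr _ W2.symm rfl
    rw [he] at r2
    have h1x : E.s (S.bet _ hp0 hp0i _ hj'i hb1) =
        E.r (S.bet n hn hni j hji hb) :=
      (S.bet_s _ hp0 hp0i _ hj'i hb1).trans
        ((congrArg E.r A1').trans (S.bet_r n hn hni j hji hb).symm)
    have h2x : E.c (S.bet _ hp0 hp0i _ hj'i hb1) ≠
        E.c (S.bet n hn hni j hji hb) := by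
      rw [S.bet_c, S.bet_c]; exact hcase
    have r3 := swap_crel S.hC h1x h2x
    have r4 := ccomp_crel S.hcc' hcase (by rw [← add_assoc]; exact hbig)
      hb1 hbig hb2 hb3
    have r5 := S.bet_crel _ hp0 hp0i j hji hb2
    rw [A2] at r5
    have r6 := S.bet_crel _ hb2 hx2 _ hj'i hb3
    -- composability and colours
    have hfg : E.s (S.alpha _ hp0 hp0i).1 =
        E.r (S.lam'.onE ⟨(n - Pi.single (ch _ hq0) 1, ch _ hq0), hb1⟩) :=
      (S.alpha _ hp0 hp0i).2.2.trans (r_comm' _ hp0).symm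
    have hgh : E.s (S.lam'.onE ⟨(n - Pi.single (ch _ hq0) 1, ch _ hq0), hb1⟩) =
        E.r (S.lam'.onE ⟨((n - Pi.single (ch _ hq0) 1) + Pi.single (ch _ hq0) 1,
          j), hbig⟩) :=
      (s_comm' _ hb1).trans (r_comm' _ hb1).symm
    have hcfg : E.c (S.alpha _ hp0 hp0i).1 ≠
        E.c (S.lam'.onE ⟨(n - Pi.single (ch _ hq0) 1, ch _ hq0), hb1⟩) := by
      rw [(S.alpha _ hp0 hp0i).2.1, c_comm']; exact Ne.symm hj'i
    have hcgh : E.c (S.lam'.onE ⟨(n - Pi.single (ch _ hq0) 1, ch _ hq0), hb1⟩) ≠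
        E.c (S.lam'.onE ⟨((n - Pi.single (ch _ hq0) 1) + Pi.single (ch _ hq0) 1,
          j), hbig⟩) := by
      rw [c_comm', c_comm']; exact hcase
    have hcfh : E.c (S.alpha _ hp0 hp0i).1 ≠
        E.c (S.lam'.onE ⟨((n - Pi.single (ch _ hq0) 1) + Pi.single (ch _ hq0) 1,
          j), hbig⟩) := by
      rw [(S.alpha _ hp0 hp0i).2.1, c_comm']; exact Ne.symm hji
    obtain ⟨hf2, -, -⟩ := hA _ _ _ _ _ _ _ _ _ _ _ _ _ _ _
      hfg hgh hcfg hcgh hcfh r1 r2 r3 r4 r5 r6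
    exact hf2.symm.trans (S.gam_congr hq_sub).symm

end LemA
section LemB

variable {E : ColouredGraph k} {C : Set (MorphOf E)}

theorem StepCtx.lemB (S : StepCtx E C) (hA : Associative E C)
    (p : Fin k → ℕ) (hp : p ≤ S.m') (hpi : p S.i = 0) (j j' : Fin k)
    (hjj : j' ≠ j) (hji : j ≠ S.i) (hj'i : j' ≠ S.i)
    (hb1 : p + Pi.single j' 1 ≤ S.m')
    (hx1 : (p + Pi.single j' 1 : Fin k → ℕ) S.i = 0)
    (hbig : (p + Pi.single j' 1) + Pi.single j 1 ≤ S.m')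
    (hb2 : p + Pi.single j 1 ≤ S.m')
    (hx2 : (p + Pi.single j 1 : Fin k → ℕ) S.i = 0)
    (hb3 : (p + Pi.single j 1) + Pi.single j' 1 ≤ S.m') :
    CRel E C (S.bet p hp hpi j' hj'i hb1)
      (S.bet (p + Pi.single j' 1) hb1 hx1 j hji hbig)
      (S.bet p hp hpi j hji hb2)
      (S.bet (p + Pi.single j 1) hb2 hx2 j' hj'i hb3) := by
  have A1' : S.gam p hp hpi j' hj'i hb1 = (S.alpha (p + Pi.single j' 1) hb1 hx1).1 :=
    S.lemA hA _ p hp hpi j' hj'i hb1 hx1 rfl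
  have A2 : S.gam p hp hpi j hji hb2 = (S.alpha (p + Pi.single j 1) hb2 hx2).1 :=
    S.lemA hA _ p hp hpi j hji hb2 hx2 rfl
  have r1 := S.bet_crel p hp hpi j' hj'i hb1
  have r2 := S.bet_crel _ hb1 hx1 j hji hbig
  rw [← A1'] at r2
  have h1x : E.s (S.bet p hp hpi j' hj'i hb1) =
      E.r (S.bet (p + Pi.single j' 1) hb1 hx1 j hji hbig) :=
    (S.bet_s p hp hpi j' hj'i hb1).trans
      ((congrArg E.r A1').trans (S.bet_r _ hb1 hx1 j hji hbig).symm)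
  have h2x : E.c (S.bet p hp hpi j' hj'i hb1) ≠
      E.c (S.bet (p + Pi.single j' 1) hb1 hx1 j hji hbig) := by
    rw [S.bet_c, S.bet_c]; exact hjj
  have r3 := swap_crel S.hC h1x h2x
  have r4 := ccomp_crel S.hcc' hjj (by rw [← add_assoc]; exact hbig)
    hb1 hbig hb2 hb3
  have r5 := S.bet_crel p hp hpi j hji hb2
  rw [A2] at r5
  have r6 := S.bet_crel _ hb2 hx2 j' hj'i hb3
  have hfg : E.s (S.alpha p hp hpi).1 = E.r (S.lam'.onE ⟨(p, j'), hb1⟩) :=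
    (S.alpha p hp hpi).2.2.trans (r_comm' _ hp).symm
  have hgh : E.s (S.lam'.onE ⟨(p, j'), hb1⟩) =
      E.r (S.lam'.onE ⟨(p + Pi.single j' 1, j), hbig⟩) :=
    (s_comm' _ hb1).trans (r_comm' _ hb1).symm
  have hcfg : E.c (S.alpha p hp hpi).1 ≠ E.c (S.lam'.onE ⟨(p, j'), hb1⟩) := by
    rw [(S.alpha p hp hpi).2.1, c_comm']; exact Ne.symm hj'i
  have hcgh : E.c (S.lam'.onE ⟨(p, j'), hb1⟩) ≠
      E.c (S.lam'.onE ⟨(p + Pi.single j' 1, j), hbig⟩) := by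
    rw [c_comm', c_comm']; exact hjj
  have hcfh : E.c (S.alpha p hp hpi).1 ≠
      E.c (S.lam'.onE ⟨(p + Pi.single j' 1, j), hbig⟩) := by
    rw [(S.alpha p hp hpi).2.1, c_comm']; exact Ne.symm hji
  obtain ⟨-, hg2, hh2⟩ := hA _ _ _ _ _ _ _ _ _ _ _ _ _ _ _
    hfg hgh hcfg hcgh hcfh r1 r2 r3 r4 r5 r6
  rw [hh2, hg2]
  exact r3

end LemB
section LamDef

variable {E : ColouredGraph k} {C : Set (MorphOf E)}

theorem slab_le {m'' n : Fin k → ℕ} {i' : Fin k}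
    (hn : n ≤ Pi.single i' 1 + m'') (h : n i' = 0) : n ≤ m'' :=
  pi_le fun l => by
    have h2 := hn l
    simp only [Pi.add_apply] at h2
    rcases eq_or_ne l i' with rfl | hl
    · rw [h]; exact zero_le
    · rwa [Pi.single_eq_of_ne hl, zero_add] at h2

theorem reg_le {m'' n : Fin k → ℕ} {i' : Fin k}
    (hn : n ≤ Pi.single i' 1 + m'') (h : n i' ≠ 0) : n - Pi.single i' 1 ≤ m'' :=
  pi_le fun l => by
    have h2 := hn l
    simp only [Pi.add_apply] at h2
    show n l - (Pi.single i' 1 : Fin k → ℕ) l ≤ m'' l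
    rcases eq_or_ne l i' with rfl | hl
    · rw [Pi.single_eq_same] at h2 ⊢; omega
    · rw [Pi.single_eq_of_ne hl] at h2 ⊢; omega

theorem reg_edge_le {m'' p : Fin k → ℕ} {i' c : Fin k}
    (h : p + Pi.single c 1 ≤ Pi.single i' 1 + m'') (hpi : p i' ≠ 0) :
    (p - Pi.single i' 1) + Pi.single c 1 ≤ m'' :=
  pi_le fun l => by
    have h2 := h l
    simp only [Pi.add_apply] at h2
    show p l - (Pi.single i' 1 : Fin k → ℕ) l + (Pi.single c 1 : Fin k → ℕ) l ≤ m'' l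
    rcases eq_or_ne l i' with rfl | hl
    · rw [Pi.single_eq_same] at h2 ⊢; omega
    · rw [Pi.single_eq_of_ne hl] at h2 ⊢; omega

theorem slab_edge_le {m'' p : Fin k → ℕ} {i' c : Fin k} (hpi : p i' = 0)
    (hji : c ≠ i') (h : p + Pi.single c 1 ≤ Pi.single i' 1 + m'') :
    p + Pi.single c 1 ≤ m'' :=
  pi_le fun l => by
    have h2 := h l
    simp only [Pi.add_apply] at h2
    show p l + (Pi.single c 1 : Fin k → ℕ) l ≤ m'' l
    rcases eq_or_ne l i' with rfl | hl
    · rw [Pi.single_eq_same] at h2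
      rw [Pi.single_eq_of_ne (Ne.symm hji)] at h2 ⊢
      omega
    · rw [Pi.single_eq_of_ne hl] at h2; omega

theorem sub_add_single_comm' {q : Fin k → ℕ} {i' a : Fin k} (h : q i' ≠ 0) :
    (q + Pi.single a 1 : Fin k → ℕ) - Pi.single i' 1 =
      (q - Pi.single i' 1) + Pi.single a 1 := by
  funext l
  show (q l + (Pi.single a 1 : Fin k → ℕ) l) - (Pi.single i' 1 : Fin k → ℕ) l =
    (q l - (Pi.single i' 1 : Fin k → ℕ) l) + (Pi.single a 1 : Fin k → ℕ) l
  rcases eq_or_ne l i' with rfl | hl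
  · rw [Pi.single_eq_same]; omega
  · rw [Pi.single_eq_of_ne hl]; omega

variable (S : StepCtx E C)

noncomputable def StepCtx.onV' (n : Fin k → ℕ)
    (hn : n ≤ Pi.single S.i 1 + S.m') : E.V :=
  if h : n S.i = 0 then E.r (S.alpha n (slab_le hn h) h).1
  else S.lam'.onV ⟨n - Pi.single S.i 1, reg_le hn h⟩

noncomputable def StepCtx.onE' (p : Fin k → ℕ) (j : Fin k)
    (h : p + Pi.single j 1 ≤ Pi.single S.i 1 + S.m') : E.E :=
  if hpi : p S.i = 0 then
    if hji : j = S.i then (S.alpha p (slab_le (le_trans le_self_add h) hpi) hpi).1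
    else S.bet p (slab_le (le_trans le_self_add h) hpi) hpi j hji
      (slab_edge_le hpi hji h)
  else S.lam'.onE ⟨(p - Pi.single S.i 1, j), reg_edge_le h hpi⟩

theorem StepCtx.onV'_slab {n hn} (h : n S.i = 0) (hn') :
    S.onV' n hn = E.r (S.alpha n hn' h).1 := by
  rw [StepCtx.onV', dif_pos h]

theorem StepCtx.onV'_reg {n hn} (h : n S.i ≠ 0) (hsub) :
    S.onV' n hn = S.lam'.onV ⟨n - Pi.single S.i 1, hsub⟩ := by
  rw [StepCtx.onV', dif_neg h]

theorem StepCtx.onV'_congr {n n' hn hn'} (h : n = n') :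
    S.onV' n hn = S.onV' n' hn' := by subst h; rfl

theorem StepCtx.onE'_slab_i {p j h} (hpi : p S.i = 0) (hji : j = S.i) (hp') :
    S.onE' p j h = (S.alpha p hp' hpi).1 := by
  rw [StepCtx.onE', dif_pos hpi, dif_pos hji]

theorem StepCtx.onE'_slab {p j h} (hpi : p S.i = 0) (hji : j ≠ S.i) (hp' hb') :
    S.onE' p j h = S.bet p hp' hpi j hji hb' := by
  rw [StepCtx.onE', dif_pos hpi, dif_neg hji]

theorem StepCtx.onE'_reg {p j h} (hpi : p S.i ≠ 0) (hsub) :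
    S.onE' p j h = S.lam'.onE ⟨(p - Pi.single S.i 1, j), hsub⟩ := by
  rw [StepCtx.onE', dif_neg hpi]

theorem StepCtx.onE'_c (p j h) : E.c (S.onE' p j h) = j := by
  by_cases hpi : p S.i = 0
  · by_cases hji : j = S.i
    · rw [S.onE'_slab_i hpi hji (slab_le (le_trans le_self_add h) hpi),
        (S.alpha _ _ _).2.1, hji]
    · rw [S.onE'_slab hpi hji (slab_le (le_trans le_self_add h) hpi)
        (slab_edge_le hpi hji h), S.bet_c]
  · rw [S.onE'_reg hpi (reg_edge_le h hpi), c_comm']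

theorem StepCtx.onE'_r (p j h) (h2 : p ≤ Pi.single S.i 1 + S.m') :
    E.r (S.onE' p j h) = S.onV' p h2 := by
  by_cases hpi : p S.i = 0
  · have hp' := slab_le (le_trans le_self_add h) hpi
    rw [S.onV'_slab hpi hp']
    by_cases hji : j = S.i
    · rw [S.onE'_slab_i hpi hji hp']
    · rw [S.onE'_slab hpi hji hp' (slab_edge_le hpi hji h), S.bet_r]
  · rw [S.onV'_reg hpi (reg_le h2 hpi), S.onE'_reg hpi (reg_edge_le h hpi),
      r_comm' _ (reg_le h2 hpi)]

theorem StepCtx.onE'_s (hA : Associative E C) (p j h)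
    (h2 : p + Pi.single j 1 ≤ Pi.single S.i 1 + S.m') :
    E.s (S.onE' p j h) = S.onV' (p + Pi.single j 1) h2 := by
  by_cases hpi : p S.i = 0
  · have hp' := slab_le (le_trans le_self_add h) hpi
    by_cases hji : j = S.i
    · rw [S.onE'_slab_i hpi hji hp', (S.alpha p hp' hpi).2.2]
      have hne : (p + Pi.single j 1 : Fin k → ℕ) S.i ≠ 0 := by
        rw [← hji, apply_add_single_self]; omega
      rw [S.onV'_reg hne (reg_le h2 hne)]
      refine onV_congr _ ?_
      rw [← hji, add_single_sub]
    · have hb' := slab_edge_le hpi hji h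
      have hqi : (p + Pi.single j 1 : Fin k → ℕ) S.i = 0 := by
        rw [apply_add_single_ne (fun hh => hji hh.symm)]; exact hpi
      rw [S.onE'_slab hpi hji hp' hb', S.bet_s, S.onV'_slab hqi hb',
        S.lemA hA _ p hp' hpi j hji hb' hqi rfl]
  · have hne : (p + Pi.single j 1 : Fin k → ℕ) S.i ≠ 0 := by
      have : p S.i ≤ (p + Pi.single j 1 : Fin k → ℕ) S.i := by
        simp only [Pi.add_apply]; omega
      omega
    rw [S.onE'_reg hpi (reg_edge_le h hpi), s_comm' _ (reg_edge_le h hpi),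
      S.onV'_reg hne (reg_le h2 hne)]
    exact onV_congr _ (sub_add_single_comm' hpi).symm

/-- The extended morphism on the full grid. -/
noncomputable def StepCtx.Lam (hA : Associative E C) :
    CGM (grid k (Pi.single S.i 1 + S.m')) E where
  onV n := S.onV' n.1 n.2
  onE e := S.onE' e.1.1 e.1.2 e.2
  r_comm e := S.onE'_r e.1.1 e.1.2 e.2 _
  s_comm e := S.onE'_s hA e.1.1 e.1.2 e.2 _
  c_comm e := S.onE'_c e.1.1 e.1.2 e.2

theorem StepCtx.Lam_onV (hA : Associative E C) (n : Fin k → ℕ) (hn) :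
    (S.Lam hA).onV ⟨n, hn⟩ = S.onV' n hn := rfl

theorem StepCtx.Lam_onE (hA : Associative E C) (p : Fin k → ℕ) (j : Fin k) (h) :
    (S.Lam hA).onE ⟨(p, j), h⟩ = S.onE' p j h := rfl

end LamDef
section SquareMem

variable {E : ColouredGraph k} {C : Set (MorphOf E)}

theorem crel_symm {e f f' e' : E.E} (h : CRel E C e f f' e') :
    CRel E C f' e' e f := by
  obtain ⟨h1, h2, φ, hm, t1, t2⟩ := h
  exact ⟨h2.symm, h1.symm, φ, hm, t2, t1⟩

theorem le_two_single {w : Fin k → ℕ} {a b : Fin k} (hab : a ≠ b)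
    (h : w ≤ Pi.single a 1 + Pi.single b 1) :
    w = 0 ∨ w = Pi.single a 1 ∨ w = Pi.single b 1 ∨
      w = Pi.single a 1 + Pi.single b 1 := by
  have hwa : w a ≤ 1 := by
    have := h a
    simp only [Pi.add_apply, Pi.single_eq_same, Pi.single_eq_of_ne hab] at this
    omega
  have hwb : w b ≤ 1 := by
    have := h b
    simp only [Pi.add_apply, Pi.single_eq_same,
      Pi.single_eq_of_ne (Ne.symm hab)] at this
    omega
  have hw0 : ∀ l, l ≠ a → l ≠ b → w l = 0 := fun l hla hlb => by
    have := h l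
    simp only [Pi.add_apply, Pi.single_eq_of_ne hla,
      Pi.single_eq_of_ne hlb] at this
    omega
  have key : ∀ (x y : ℕ), w a = x → w b = y →
      w = Pi.single a x + Pi.single b y := fun x y hx hy => by
    funext l
    simp only [Pi.add_apply, Pi.single_apply]
    rcases eq_or_ne l a with rfl | hla
    · rw [if_pos rfl, if_neg hab]; omega
    · rcases eq_or_ne l b with rfl | hlb
      · rw [if_neg hla, if_pos rfl]; omega
      · rw [if_neg hla, if_neg hlb]
        have := hw0 l hla hlb
        omega
  interval_cases hA : (w a) <;> interval_cases hB : (w b)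
  · left; have := key 0 0 rfl rfl; simpa using this
  · right; right; left; have := key 0 1 rfl rfl; simpa using this
  · right; left; have := key 1 0 rfl rfl; simpa using this
  · right; right; right; exact key 1 1 rfl rfl

theorem edge_two_single {w : Fin k → ℕ} {c a b : Fin k} (hab : a ≠ b)
    (h : w + Pi.single c 1 ≤ Pi.single a 1 + Pi.single b 1) :
    (c = a ∧ w = 0) ∨ (c = b ∧ w = Pi.single a 1) ∨
      (c = b ∧ w = 0) ∨ (c = a ∧ w = Pi.single b 1) := by
  have hw : w ≤ Pi.single a 1 + Pi.single b 1 :=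
    le_trans le_self_add h
  have hc : c = a ∨ c = b := by
    by_contra hcc
    push_neg at hcc
    have := h c
    simp only [Pi.add_apply, Pi.single_eq_same, Pi.single_eq_of_ne hcc.1,
      Pi.single_eq_of_ne hcc.2] at this
    omega
  have hwc : w c = 0 := by
    have h1 := h c
    simp only [Pi.add_apply, Pi.single_eq_same] at h1
    rcases hc with rfl | rfl
    · rw [Pi.single_eq_same, Pi.single_eq_of_ne hab] at h1; omega
    · rw [Pi.single_eq_same, Pi.single_eq_of_ne (Ne.symm hab)] at h1; omega
  rcases le_two_single hab hw with rfl | h1 | h1 | h1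
  · rcases hc with rfl | rfl
    · exact Or.inl ⟨rfl, rfl⟩
    · exact Or.inr (Or.inr (Or.inl ⟨rfl, rfl⟩))
  · rcases hc with rfl | rfl
    · exfalso; rw [h1, Pi.single_eq_same] at hwc; omega
    · exact Or.inr (Or.inl ⟨rfl, h1⟩)
  · rcases hc with rfl | rfl
    · exact Or.inr (Or.inr (Or.inr ⟨rfl, h1⟩))
    · exfalso; rw [h1, Pi.single_eq_same] at hwc; omega
  · exfalso
    rcases hc with rfl | rfl
    · rw [h1] at hwc
      simp only [Pi.add_apply, Pi.single_eq_same] at hwc; omega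
    · rw [h1] at hwc
      simp only [Pi.add_apply, Pi.single_eq_same] at hwc; omega

theorem square_mem {M : Fin k → ℕ} (lam : CGM (grid k M) E)
    {q : Fin k → ℕ} {a b : Fin k} (hab : a ≠ b)
    (hsq : q + (Pi.single a 1 + Pi.single b 1) ≤ M)
    (ha : q + Pi.single a 1 ≤ M) (hab2 : (q + Pi.single a 1) + Pi.single b 1 ≤ M)
    (hb : q + Pi.single b 1 ≤ M) (hba2 : (q + Pi.single b 1) + Pi.single a 1 ≤ M)
    {u v v' u' : E.E} (hrel : CRel E C u v v' u')
    (e1 : lam.onE ⟨(q, a), ha⟩ = u) (e2 : lam.onE ⟨(q + Pi.single a 1, b), hab2⟩ = v)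
    (e3 : lam.onE ⟨(q, b), hb⟩ = v') (e4 : lam.onE ⟨(q + Pi.single b 1, a), hba2⟩ = u') :
    (⟨Pi.single a 1 + Pi.single b 1, restrictTo lam q _ hsq⟩ : MorphOf E) ∈ C := by
  have hcu : E.c u = a := by rw [← e1, c_comm']
  have hcv : E.c v = b := by rw [← e2, c_comm']
  obtain ⟨hcv', hcu', φ, hφC, t1, t2⟩ := hrel
  obtain ⟨mφ, g⟩ := φ
  obtain ⟨hM1, ⟨hp1, q1⟩, ⟨hp2, q2⟩⟩ := (traverses_pair_iff g u v).1 t1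
  obtain ⟨-, ⟨hp3, q3⟩, ⟨hp4, q4⟩⟩ := (traverses_pair_iff g v' u').1 t2
  have hMdeg : mφ = Pi.single a 1 + Pi.single b 1 := by rw [← hM1, hcu, hcv]
  subst hMdeg
  suffices hfg : restrictTo lam q _ hsq = g by rw [hfg]; exact hφC
  have hE : ∀ (w : Fin k → ℕ) (c : Fin k)
      (h1 : w + Pi.single c 1 ≤ Pi.single a 1 + Pi.single b 1),
      (restrictTo lam q _ hsq).onE ⟨(w, c), h1⟩ = g.onE ⟨(w, c), h1⟩ := by
    intro w c h1
    show lam.onE ⟨(q + w, c), _⟩ = g.onE ⟨(w, c), h1⟩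
    rcases edge_two_single hab h1 with ⟨rfl, rfl⟩ | ⟨rfl, rfl⟩ | ⟨rfl, rfl⟩ | ⟨rfl, rfl⟩
    · rw [onE_congr lam (add_zero q) rfl (h' := ha), e1, ← q1]
      exact onE_congr g rfl hcu
    · rw [onE_congr lam rfl rfl (h' := hab2), e2, ← q2]
      exact onE_congr g (by rw [hcu]) hcv
    · rw [onE_congr lam (add_zero q) rfl (h' := hb), e3, ← q3]
      exact onE_congr g rfl (hcv'.trans hcv)
    · rw [onE_congr lam rfl rfl (h' := hba2), e4, ← q4]
      exact onE_congr g (by rw [hcv', hcv]) (hcu'.trans hcu)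
  have b0a : (0 : Fin k → ℕ) + Pi.single a 1 ≤ Pi.single a 1 + Pi.single b 1 := by
    rw [zero_add]; exact le_self_add
  have b0b : (0 : Fin k → ℕ) + Pi.single b 1 ≤ Pi.single a 1 + Pi.single b 1 := by
    rw [zero_add]; exact le_add_self
  have bab : (Pi.single a 1 + Pi.single b 1 : Fin k → ℕ) ≤
      Pi.single a 1 + Pi.single b 1 := le_refl _
  have hV : ∀ (w : Fin k → ℕ) (h1 : w ≤ Pi.single a 1 + Pi.single b 1),
      (restrictTo lam q _ hsq).onV ⟨w, h1⟩ = g.onV ⟨w, h1⟩ := by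
    intro w h1
    rcases le_two_single hab h1 with rfl | rfl | rfl | rfl
    · calc (restrictTo lam q _ hsq).onV ⟨0, h1⟩
          = E.r ((restrictTo lam q _ hsq).onE ⟨(0, a), b0a⟩) :=
            (r_comm' _ h1).symm
        _ = E.r (g.onE ⟨(0, a), b0a⟩) := congrArg E.r (hE 0 a b0a)
        _ = g.onV ⟨0, h1⟩ := r_comm' g h1
    · calc (restrictTo lam q _ hsq).onV ⟨Pi.single a 1, h1⟩
          = (restrictTo lam q _ hsq).onV ⟨0 + Pi.single a 1, b0a⟩ :=
            onV_congr _ (zero_add _).symm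
        _ = E.s ((restrictTo lam q _ hsq).onE ⟨(0, a), b0a⟩) :=
            (s_comm' _ b0a).symm
        _ = E.s (g.onE ⟨(0, a), b0a⟩) := congrArg E.s (hE 0 a b0a)
        _ = g.onV ⟨0 + Pi.single a 1, b0a⟩ := s_comm' g b0a
        _ = g.onV ⟨Pi.single a 1, h1⟩ := onV_congr _ (zero_add _)
    · calc (restrictTo lam q _ hsq).onV ⟨Pi.single b 1, h1⟩
          = (restrictTo lam q _ hsq).onV ⟨0 + Pi.single b 1, b0b⟩ :=
            onV_congr _ (zero_add _).symm
        _ = E.s ((restrictTo lam q _ hsq).onE ⟨(0, b), b0b⟩) :=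
            (s_comm' _ b0b).symm
        _ = E.s (g.onE ⟨(0, b), b0b⟩) := congrArg E.s (hE 0 b b0b)
        _ = g.onV ⟨0 + Pi.single b 1, b0b⟩ := s_comm' g b0b
        _ = g.onV ⟨Pi.single b 1, h1⟩ := onV_congr _ (zero_add _)
    · calc (restrictTo lam q _ hsq).onV ⟨Pi.single a 1 + Pi.single b 1, h1⟩
          = E.s ((restrictTo lam q _ hsq).onE ⟨(Pi.single a 1, b), bab⟩) :=
            (s_comm' _ bab).symm
        _ = E.s (g.onE ⟨(Pi.single a 1, b), bab⟩) :=
            congrArg E.s (hE (Pi.single a 1) b bab)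
        _ = g.onV ⟨Pi.single a 1 + Pi.single b 1, h1⟩ := s_comm' g bab
  refine CGM.ext' (funext fun n => ?_) (funext fun e => ?_)
  · obtain ⟨w, h1⟩ := n
    exact hV w h1
  · obtain ⟨⟨w, c⟩, h1⟩ := e
    exact hE w c h1

end SquareMem
section LamCComp

variable {E : ColouredGraph k} {C : Set (MorphOf E)}

theorem reg_add_le {m'' q w : Fin k → ℕ} {i' : Fin k}
    (h : q + w ≤ Pi.single i' 1 + m'') (hqi : q i' ≠ 0) :
    (q - Pi.single i' 1) + w ≤ m'' :=
  pi_le fun l => by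
    have h2 := h l
    simp only [Pi.add_apply] at h2
    show q l - (Pi.single i' 1 : Fin k → ℕ) l + w l ≤ m'' l
    rcases eq_or_ne l i' with rfl | hl
    · rw [Pi.single_eq_same] at h2 ⊢; omega
    · rw [Pi.single_eq_of_ne hl] at h2 ⊢; omega

theorem apply_le_add_single (q : Fin k → ℕ) (a l : Fin k) :
    q l ≤ (q + Pi.single a 1 : Fin k → ℕ) l := by
  simp only [Pi.add_apply]; omega

theorem StepCtx.Lam_ccomp (S : StepCtx E C) (hA : Associative E C) :
    CComp E C (S.Lam hA) := by
  intro q a b hab h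
  have ha : q + Pi.single a 1 ≤ Pi.single S.i 1 + S.m' :=
    le_trans (add_le_add_right le_self_add q) h
  have hab2 : (q + Pi.single a 1) + Pi.single b 1 ≤ Pi.single S.i 1 + S.m' := by
    rw [add_assoc]; exact h
  have hb : q + Pi.single b 1 ≤ Pi.single S.i 1 + S.m' :=
    le_trans (add_le_add_right le_add_self q) h
  have hba2 : (q + Pi.single b 1) + Pi.single a 1 ≤ Pi.single S.i 1 + S.m' := by
    rw [add_assoc, add_comm (Pi.single b 1)]; exact h
  by_cases hqi : q S.i = 0
  · have hq' : q ≤ S.m' := slab_le (le_trans le_self_add ha) hqi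
    by_cases hai : a = S.i
    · have hbi : b ≠ S.i := fun hh => hab (hai.trans hh.symm)
      have hb'' : q + Pi.single b 1 ≤ S.m' := slab_edge_le hqi hbi hb
      have hqbi : (q + Pi.single b 1 : Fin k → ℕ) S.i = 0 := by
        rw [apply_add_single_ne (fun hh => hbi hh.symm)]; exact hqi
      have hrel0 := S.bet_crel q hq' hqi b hbi hb''
      rw [S.lemA hA _ q hq' hqi b hbi hb'' hqbi rfl] at hrel0
      refine square_mem _ hab h ha hab2 hb hba2 hrel0 ?_ ?_ ?_ ?_
      · exact S.onE'_slab_i (h := ha) hqi hai hq'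
      · have hone : (Pi.single a 1 : Fin k → ℕ) S.i = 1 := by
          rw [Pi.single_apply, if_pos hai.symm]
        have hne : (q + Pi.single a 1 : Fin k → ℕ) S.i ≠ 0 := by
          simp only [Pi.add_apply, hone]; omega
        have hpos : (q + Pi.single a 1 : Fin k → ℕ) - Pi.single S.i 1 = q := by
          rw [hai, add_single_sub]
        exact (S.onE'_reg (h := hab2) hne (by rw [hpos]; exact hb'')).trans
          (onE_congr _ hpos rfl)
      · exact S.onE'_slab (h := hb) hqi hbi hq' hb''
      · exact S.onE'_slab_i (h := hba2) hqbi hai hb''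
    · by_cases hbi2 : b = S.i
      · have ha'' : q + Pi.single a 1 ≤ S.m' := slab_edge_le hqi hai ha
        have hqa_i : (q + Pi.single a 1 : Fin k → ℕ) S.i = 0 := by
          rw [apply_add_single_ne (fun hh => hai hh.symm)]; exact hqi
        have hrel0 := S.bet_crel q hq' hqi a hai ha''
        rw [S.lemA hA _ q hq' hqi a hai ha'' hqa_i rfl] at hrel0
        refine square_mem _ hab h ha hab2 hb hba2 (crel_symm hrel0) ?_ ?_ ?_ ?_
        · exact S.onE'_slab (h := ha) hqi hai hq' ha''
        · exact S.onE'_slab_i (h := hab2) hqa_i hbi2 ha''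
        · exact S.onE'_slab_i (h := hb) hqi hbi2 hq'
        · have hone : (Pi.single b 1 : Fin k → ℕ) S.i = 1 := by
            rw [Pi.single_apply, if_pos hbi2.symm]
          have hne : (q + Pi.single b 1 : Fin k → ℕ) S.i ≠ 0 := by
            simp only [Pi.add_apply, hone]; omega
          have hpos : (q + Pi.single b 1 : Fin k → ℕ) - Pi.single S.i 1 = q := by
            rw [hbi2, add_single_sub]
          exact (S.onE'_reg (h := hba2) hne (by rw [hpos]; exact ha'')).trans
            (onE_congr _ hpos rfl)
      · have ha'' : q + Pi.single a 1 ≤ S.m' := slab_edge_le hqi hai ha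
        have hb'' : q + Pi.single b 1 ≤ S.m' := slab_edge_le hqi hbi2 hb
        have hqa_i : (q + Pi.single a 1 : Fin k → ℕ) S.i = 0 := by
          rw [apply_add_single_ne (fun hh => hai hh.symm)]; exact hqi
        have hqb_i : (q + Pi.single b 1 : Fin k → ℕ) S.i = 0 := by
          rw [apply_add_single_ne (fun hh => hbi2 hh.symm)]; exact hqi
        have hbigs : (q + Pi.single a 1) + Pi.single b 1 ≤ S.m' :=
          slab_edge_le hqa_i hbi2 hab2
        have hb3s : (q + Pi.single b 1) + Pi.single a 1 ≤ S.m' :=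
          slab_edge_le hqb_i hai hba2
        have hrel := S.lemB hA q hq' hqi b a hab hbi2 hai ha'' hqa_i hbigs
          hb'' hqb_i hb3s
        refine square_mem _ hab h ha hab2 hb hba2 hrel ?_ ?_ ?_ ?_
        · exact S.onE'_slab (h := ha) hqi hai hq' ha''
        · exact S.onE'_slab (h := hab2) hqa_i hbi2 ha'' hbigs
        · exact S.onE'_slab (h := hb) hqi hbi2 hq' hb''
        · exact S.onE'_slab (h := hba2) hqb_i hai hb'' hb3s
  · have hsub : (q - Pi.single S.i 1) + (Pi.single a 1 + Pi.single b 1) ≤ S.m' :=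
      reg_add_le h hqi
    have hra : (q - Pi.single S.i 1) + Pi.single a 1 ≤ S.m' := reg_add_le ha hqi
    have hrab : ((q - Pi.single S.i 1) + Pi.single a 1) + Pi.single b 1 ≤ S.m' := by
      rw [add_assoc]; exact hsub
    have hrb : (q - Pi.single S.i 1) + Pi.single b 1 ≤ S.m' := reg_add_le hb hqi
    have hrba : ((q - Pi.single S.i 1) + Pi.single b 1) + Pi.single a 1 ≤ S.m' := by
      rw [add_assoc, add_comm (Pi.single b 1)]; exact hsub
    have hrel := ccomp_crel S.hcc' hab hsub hra hrab hrb hrba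
    have hne_a : (q + Pi.single a 1 : Fin k → ℕ) S.i ≠ 0 := by
      have := apply_le_add_single q a S.i; omega
    have hne_b : (q + Pi.single b 1 : Fin k → ℕ) S.i ≠ 0 := by
      have := apply_le_add_single q b S.i; omega
    refine square_mem _ hab h ha hab2 hb hba2 hrel ?_ ?_ ?_ ?_
    · exact S.onE'_reg (h := ha) hqi hra
    · exact (S.onE'_reg (h := hab2) hne_a (by rw [sub_add_single_comm' hqi]; exact hrab)).trans
        (onE_congr _ (sub_add_single_comm' hqi) rfl)
    · exact S.onE'_reg (h := hb) hqi hrb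
    · exact (S.onE'_reg (h := hba2) hne_b (by rw [sub_add_single_comm' hqi]; exact hrba)).trans
        (onE_congr _ (sub_add_single_comm' hqi) rfl)

end LamCComp
section Uniqueness

variable {E : ColouredGraph k} {C : Set (MorphOf E)}

theorem slab_i_bound {m'' n : Fin k → ℕ} {i' : Fin k}
    (hn : n ≤ Pi.single i' 1 + m'') (hni : n i' = 0) :
    n + Pi.single i' 1 ≤ Pi.single i' 1 + m'' :=
  pi_le fun l => by
    have h2 := hn l
    simp only [Pi.add_apply] at h2 ⊢
    rcases eq_or_ne l i' with rfl | hl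
    · rw [Pi.single_eq_same] at h2 ⊢; omega
    · rw [Pi.single_eq_of_ne hl] at h2 ⊢; omega

theorem single_add_sub (w : Fin k → ℕ) (j : Fin k) (h : w j ≠ 0) :
    Pi.single j 1 + (w - Pi.single j 1) = w := by
  rw [add_comm, sub_single_add h]

theorem sigma_snd_eq {m0 : Fin k → ℕ} {f g : CGM (grid k m0) E}
    (h : (⟨m0, f⟩ : MorphOf E) = ⟨m0, g⟩) : f = g := by
  exact eq_of_heq (Sigma.mk.inj_iff.mp h).2

theorem restrict_restrict {M : Fin k → ℕ} (lam : CGM (grid k M) E)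
    (p1 m1 : Fin k → ℕ) (h1 : p1 + m1 ≤ M) (p2 m2 : Fin k → ℕ)
    (h2 : p2 + m2 ≤ m1) (h3 : (p1 + p2) + m2 ≤ M) :
    restrictTo (restrictTo lam p1 m1 h1) p2 m2 h2 =
      restrictTo lam (p1 + p2) m2 h3 := by
  refine CGM.ext' (funext fun n => ?_) (funext fun ed => ?_)
  · obtain ⟨w, hw⟩ := n
    exact onV_congr lam (add_assoc p1 p2 w).symm
  · obtain ⟨⟨w, c⟩, hwc⟩ := ed
    exact onE_congr lam (add_assoc p1 p2 w).symm rfl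

theorem ccomp_restrict {M : Fin k → ℕ} {lam : CGM (grid k M) E}
    (hcc : CComp E C lam) (p m2 : Fin k → ℕ) (h : p + m2 ≤ M) :
    CComp E C (restrictTo lam p m2 h) := by
  intro q a b hab hq
  have h3 : (p + q) + (Pi.single a 1 + Pi.single b 1) ≤ M := by
    rw [add_assoc]
    exact le_trans (add_le_add_right hq p) h
  rw [restrict_restrict lam p m2 h q _ hq h3]
  exact hcc (p + q) a b hab h3

theorem restrict_traverses {M : Fin k → ℕ} (lam : CGM (grid k M) E)
    {q : Fin k → ℕ} {a b : Fin k}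
    (hsq : q + (Pi.single a 1 + Pi.single b 1) ≤ M)
    (ha : q + Pi.single a 1 ≤ M)
    (hab2 : (q + Pi.single a 1) + Pi.single b 1 ≤ M) :
    Traverses (restrictTo lam q _ hsq)
      [lam.onE ⟨(q, a), ha⟩, lam.onE ⟨(q + Pi.single a 1, b), hab2⟩] := by
  rw [traverses_pair_iff]
  refine ⟨by rw [c_comm', c_comm'], ⟨?_, ?_⟩, ⟨?_, ?_⟩⟩
  · rw [c_comm', zero_add]; exact le_self_add
  · simp only [restrictTo]; exact onE_congr _ (add_zero q) (c_comm' _)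
  · rw [c_comm', c_comm']
  · simp only [restrictTo]; refine onE_congr _ ?_ (c_comm' _); rw [c_comm']

theorem traverses_tail {m2 : Fin k → ℕ} {e : E.E} {x' : List E.E}
    {lam : CGM (grid k (Pi.single (E.c e) 1 + m2)) E}
    (ht : Traverses lam (e :: x')) (hm2 : colourVec E x' = m2)
    (hres : Pi.single (E.c e) 1 + m2 ≤ Pi.single (E.c e) 1 + m2) :
    Traverses (restrictTo lam (Pi.single (E.c e) 1) m2 hres) x' := by
  subst hm2
  refine ⟨rfl, fun l hl => ?_⟩
  obtain ⟨hb, heq⟩ := ht.2 (l + 1) (by simpa using hl)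
  have hb' : (Pi.single (E.c e) 1 + colourVec E (x'.take l)) +
      Pi.single (E.c (x'.get ⟨l, hl⟩)) 1 ≤
      Pi.single (E.c e) 1 + colourVec E x' := hb
  have hb'' : colourVec E (x'.take l) + Pi.single (E.c (x'.get ⟨l, hl⟩)) 1 ≤
      colourVec E x' := by
    rw [add_assoc] at hb'
    exact le_of_add_le_add_left hb'
  exact ⟨hb'', heq⟩

theorem gRng_restrict_tail {m2 : Fin k → ℕ} {e : E.E} {x' : List E.E}
    {lam : CGM (grid k (Pi.single (E.c e) 1 + m2)) E}
    (ht : Traverses lam (e :: x')) (hres) :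
    gRng (restrictTo lam (Pi.single (E.c e) 1) m2 hres) = E.s e := by
  obtain ⟨hb0, he0⟩ := ht.2 0 (Nat.succ_pos _)
  have he0' : lam.onE ⟨(0, E.c e), hb0⟩ = e := he0
  calc gRng (restrictTo lam (Pi.single (E.c e) 1) m2 hres)
      = lam.onV ⟨Pi.single (E.c e) 1 + 0, le_trans (add_le_add_right zero_le _) hres⟩ := rfl
    _ = lam.onV ⟨0 + Pi.single (E.c e) 1, hb0⟩ :=
        onV_congr _ (by rw [add_zero, zero_add])
    _ = E.s (lam.onE ⟨(0, E.c e), hb0⟩) := (s_comm' _ _).symm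
    _ = E.s e := congrArg E.s he0'

theorem uniq_aux (hC : Complete E C) :
    ∀ (x : List E.E) (v : E.V) (m : Fin k → ℕ), colourVec E x = m →
      x.Chain' (fun e f => E.s e = E.r f) → (∀ e ∈ x.head?, E.r e = v) →
      ∀ (lam mu : CGM (grid k m) E),
      CComp E C lam → Traverses lam x → gRng lam = v →
      CComp E C mu → Traverses mu x → gRng mu = v → lam = mu := by
  intro x
  induction x with
  | nil =>
    intro v m hm hch hhd lam mu hc1 ht1 hr1 hc2 ht2 hr2
    subst hm
    refine CGM.ext' (funext fun n => ?_) (funext fun ed => ?_)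
    · obtain ⟨p, hp⟩ := n
      have hp0 : p = 0 := funext fun l => Nat.le_zero.mp (hp l)
      subst hp0
      exact hr1.trans hr2.symm
    · obtain ⟨⟨p, c⟩, hp⟩ := ed
      exfalso
      have h1 : p c + (Pi.single c 1 : Fin k → ℕ) c ≤ 0 := hp c
      rw [Pi.single_eq_same] at h1
      omega
  | cons e x' IH =>
    intro v m hm hch hhd lam mu hc1 ht1 hr1 hc2 ht2 hr2
    rw [colourVec_cons] at hm
    subst hm
    obtain ⟨hhd', hch'⟩ := List.isChain_cons.mp hch
    have hresb : Pi.single (E.c e) 1 + colourVec E x' ≤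
        Pi.single (E.c e) 1 + colourVec E x' := le_refl _
    obtain ⟨hb0L, he0Lr⟩ := ht1.2 0 (Nat.succ_pos _)
    have he0L : lam.onE ⟨(0, E.c e), hb0L⟩ = e := he0Lr
    obtain ⟨hb0M, he0Mr⟩ := ht2.2 0 (Nat.succ_pos _)
    have he0M : mu.onE ⟨(0, E.c e), hb0M⟩ = e := he0Mr
    have hRR : restrictTo lam (Pi.single (E.c e) 1) (colourVec E x') hresb =
        restrictTo mu (Pi.single (E.c e) 1) (colourVec E x') hresb :=
      IH (E.s e) (colourVec E x') rfl hch' (fun f hf => (hhd' f hf).symm) _ _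
        (ccomp_restrict hc1 _ _ _) (traverses_tail ht1 rfl _)
        (gRng_restrict_tail ht1 _)
        (ccomp_restrict hc2 _ _ _) (traverses_tail ht2 rfl _)
        (gRng_restrict_tail ht2 _)
    have hVR : ∀ (p : Fin k → ℕ) (hp : p ≤ colourVec E x')
        (hp2 : Pi.single (E.c e) 1 + p ≤ Pi.single (E.c e) 1 + colourVec E x'),
        lam.onV ⟨Pi.single (E.c e) 1 + p, hp2⟩ =
          mu.onV ⟨Pi.single (E.c e) 1 + p, hp2⟩ :=
      fun p hp hp2 => congrFun (congrArg CGM.onV hRR) ⟨p, hp⟩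
    have hER : ∀ (p : Fin k → ℕ) (c : Fin k)
        (hp : p + Pi.single c 1 ≤ colourVec E x')
        (hp2 : (Pi.single (E.c e) 1 + p) + Pi.single c 1 ≤
          Pi.single (E.c e) 1 + colourVec E x'),
        lam.onE ⟨(Pi.single (E.c e) 1 + p, c), hp2⟩ =
          mu.onE ⟨(Pi.single (E.c e) 1 + p, c), hp2⟩ :=
      fun p c hp hp2 => congrFun (congrArg CGM.onE hRR) ⟨(p, c), hp⟩
    -- the slab induction
    have slab : ∀ (N : ℕ) (n : Fin k → ℕ)
        (hn : n ≤ Pi.single (E.c e) 1 + colourVec E x') (hni : n (E.c e) = 0),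
        (∑ l, n l) = N →
        (lam.onV ⟨n, hn⟩ = mu.onV ⟨n, hn⟩) ∧
        (∀ hbi : n + Pi.single (E.c e) 1 ≤ Pi.single (E.c e) 1 + colourVec E x',
          lam.onE ⟨(n, E.c e), hbi⟩ = mu.onE ⟨(n, E.c e), hbi⟩) := by
      intro N
      induction N using Nat.strong_induction_on with
      | _ N IHN =>
      intro n hn hni hNsum
      by_cases hn0 : n = 0
      · subst hn0
        exact ⟨hr1.trans hr2.symm, fun hbi => he0L.trans he0M.symm⟩
      · have hj := ch_spec n hn0
        have hji : ch n hn0 ≠ E.c e := fun hh => hj (hh ▸ hni)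
        have hpM : n - Pi.single (ch n hn0) 1 ≤ Pi.single (E.c e) 1 + colourVec E x' :=
          le_trans sub_single_le hn
        have hpi : (n - Pi.single (ch n hn0) 1 : Fin k → ℕ) (E.c e) = 0 := by
          rw [apply_sub_single]; omega
        obtain ⟨eqVp, eqEp⟩ := IHN _ (hNsum ▸ sum_sub_lt hj) _ hpM hpi rfl
        have hW2 : (n - Pi.single (ch n hn0) 1) + Pi.single (ch n hn0) 1 = n :=
          sub_single_add hj
        have hbne : n + Pi.single (E.c e) 1 ≤ Pi.single (E.c e) 1 + colourVec E x' :=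
          slab_i_bound hn hni
        have hbn : (n - Pi.single (ch n hn0) 1) + Pi.single (E.c e) 1 ≤
            Pi.single (E.c e) 1 + colourVec E x' :=
          le_trans (add_le_add_left sub_single_le _) hbne
        have hupb : ((n - Pi.single (ch n hn0) 1) + Pi.single (E.c e) 1) +
            Pi.single (ch n hn0) 1 ≤ Pi.single (E.c e) 1 + colourVec E x' := by
          rw [add_right_comm, hW2]; exact hbne
        have hx : (n - Pi.single (ch n hn0) 1) + Pi.single (ch n hn0) 1 ≤
            colourVec E x' := by
          rw [hW2]; exact slab_le hn hni
        have hy : (Pi.single (E.c e) 1 + (n - Pi.single (ch n hn0) 1)) +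
            Pi.single (ch n hn0) 1 ≤ Pi.single (E.c e) 1 + colourVec E x' := by
          rw [add_assoc, hW2]
          exact add_le_add_right (slab_le hn hni) _
        have hu' : lam.onE ⟨((n - Pi.single (ch n hn0) 1) + Pi.single (E.c e) 1,
              ch n hn0), hupb⟩ =
            mu.onE ⟨((n - Pi.single (ch n hn0) 1) + Pi.single (E.c e) 1,
              ch n hn0), hupb⟩ := by
          calc lam.onE ⟨((n - Pi.single (ch n hn0) 1) + Pi.single (E.c e) 1,
                ch n hn0), hupb⟩
              = lam.onE ⟨(Pi.single (E.c e) 1 + (n - Pi.single (ch n hn0) 1),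
                ch n hn0), hy⟩ := onE_congr _ (add_comm _ _) rfl
            _ = mu.onE ⟨(Pi.single (E.c e) 1 + (n - Pi.single (ch n hn0) 1),
                ch n hn0), hy⟩ := hER _ _ hx hy
            _ = mu.onE ⟨((n - Pi.single (ch n hn0) 1) + Pi.single (E.c e) 1,
                ch n hn0), hupb⟩ := onE_congr _ (add_comm _ _) rfl
        have hsq : (n - Pi.single (ch n hn0) 1) +
            (Pi.single (E.c e) 1 + Pi.single (ch n hn0) 1) ≤
            Pi.single (E.c e) 1 + colourVec E x' := by
          rw [← add_assoc]; exact hupb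
        have tL := restrict_traverses lam hsq hbn hupb
        have tM := restrict_traverses mu hsq hbn hupb
        rw [← eqEp hbn, ← hu'] at tM
        have hcomp : E.s (lam.onE ⟨(n - Pi.single (ch n hn0) 1, E.c e), hbn⟩) =
            E.r (lam.onE ⟨((n - Pi.single (ch n hn0) 1) + Pi.single (E.c e) 1,
              ch n hn0), hupb⟩) :=
          (s_comm' _ (le_trans le_self_add hupb)).trans
            (r_comm' _ (le_trans le_self_add hupb)).symm
        have hcol : E.c (lam.onE ⟨(n - Pi.single (ch n hn0) 1, E.c e), hbn⟩) ≠
            E.c (lam.onE ⟨((n - Pi.single (ch n hn0) 1) + Pi.single (E.c e) 1,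
              ch n hn0), hupb⟩) := by
          rw [c_comm', c_comm']; exact Ne.symm hji
        have hsig := (hC.2 _ _ hcomp hcol).unique
          ⟨hc1 _ (E.c e) (ch n hn0) (Ne.symm hji) hsq, tL⟩
          ⟨hc2 _ (E.c e) (ch n hn0) (Ne.symm hji) hsq, tM⟩
        have hsnd : restrictTo lam (n - Pi.single (ch n hn0) 1) _ hsq =
            restrictTo mu (n - Pi.single (ch n hn0) 1) _ hsq := sigma_snd_eq hsig
        have hpf : (n - Pi.single (ch n hn0) 1) + Pi.single (ch n hn0) 1 ≤
            Pi.single (E.c e) 1 + colourVec E x' := by rw [hW2]; exact hn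
        constructor
        · calc lam.onV ⟨n, hn⟩
              = lam.onV ⟨(n - Pi.single (ch n hn0) 1) + Pi.single (ch n hn0) 1,
                hpf⟩ := onV_congr _ hW2.symm
            _ = mu.onV ⟨(n - Pi.single (ch n hn0) 1) + Pi.single (ch n hn0) 1,
                hpf⟩ := congrFun (congrArg CGM.onV hsnd)
                  ⟨Pi.single (ch n hn0) 1, le_add_self⟩
            _ = mu.onV ⟨n, hn⟩ := onV_congr _ hW2
        · intro hbi
          have hpf2 : ((n - Pi.single (ch n hn0) 1) + Pi.single (ch n hn0) 1) +
              Pi.single (E.c e) 1 ≤ Pi.single (E.c e) 1 + colourVec E x' := by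
            rw [hW2]; exact hbi
          calc lam.onE ⟨(n, E.c e), hbi⟩
              = lam.onE ⟨((n - Pi.single (ch n hn0) 1) + Pi.single (ch n hn0) 1,
                E.c e), hpf2⟩ := onE_congr _ hW2.symm rfl
            _ = mu.onE ⟨((n - Pi.single (ch n hn0) 1) + Pi.single (ch n hn0) 1,
                E.c e), hpf2⟩ := congrFun (congrArg CGM.onE hsnd)
                  ⟨(Pi.single (ch n hn0) 1, E.c e), le_of_eq (add_comm _ _)⟩
            _ = mu.onE ⟨(n, E.c e), hbi⟩ := onE_congr _ hW2 rfl
    -- slab edges of other colours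
    have slabE : ∀ (n : Fin k → ℕ)
        (hn : n ≤ Pi.single (E.c e) 1 + colourVec E x') (hni : n (E.c e) = 0)
        (c : Fin k) (hc : c ≠ E.c e)
        (hbc : n + Pi.single c 1 ≤ Pi.single (E.c e) 1 + colourVec E x'),
        lam.onE ⟨(n, c), hbc⟩ = mu.onE ⟨(n, c), hbc⟩ := by
      intro n hn hni c hc hbc
      obtain ⟨eqV, eqE⟩ := slab _ n hn hni rfl
      have hni' : (n + Pi.single c 1 : Fin k → ℕ) (E.c e) = 0 := by
        rw [apply_add_single_ne (fun hh => hc hh.symm)]; exact hni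
      have hbn : n + Pi.single (E.c e) 1 ≤ Pi.single (E.c e) 1 + colourVec E x' :=
        slab_i_bound hn hni
      have hupb : (n + Pi.single (E.c e) 1) + Pi.single c 1 ≤
          Pi.single (E.c e) 1 + colourVec E x' := by
        rw [add_right_comm]; exact slab_i_bound hbc hni'
      have hx : n + Pi.single c 1 ≤ colourVec E x' := slab_le hbc hni'
      have hy : (Pi.single (E.c e) 1 + n) + Pi.single c 1 ≤
          Pi.single (E.c e) 1 + colourVec E x' := by
        rw [add_assoc]
        exact add_le_add_right hx _
      have hu' : lam.onE ⟨(n + Pi.single (E.c e) 1, c), hupb⟩ =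
          mu.onE ⟨(n + Pi.single (E.c e) 1, c), hupb⟩ := by
        calc lam.onE ⟨(n + Pi.single (E.c e) 1, c), hupb⟩
            = lam.onE ⟨(Pi.single (E.c e) 1 + n, c), hy⟩ :=
              onE_congr _ (add_comm _ _) rfl
          _ = mu.onE ⟨(Pi.single (E.c e) 1 + n, c), hy⟩ := hER _ _ hx hy
          _ = mu.onE ⟨(n + Pi.single (E.c e) 1, c), hupb⟩ :=
              onE_congr _ (add_comm _ _) rfl
      have hsq : n + (Pi.single (E.c e) 1 + Pi.single c 1) ≤
          Pi.single (E.c e) 1 + colourVec E x' := by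
        rw [← add_assoc]; exact hupb
      have tL := restrict_traverses lam hsq hbn hupb
      have tM := restrict_traverses mu hsq hbn hupb
      rw [← eqE hbn, ← hu'] at tM
      have hcomp : E.s (lam.onE ⟨(n, E.c e), hbn⟩) =
          E.r (lam.onE ⟨(n + Pi.single (E.c e) 1, c), hupb⟩) :=
        (s_comm' _ (le_trans le_self_add hupb)).trans
          (r_comm' _ (le_trans le_self_add hupb)).symm
      have hcol : E.c (lam.onE ⟨(n, E.c e), hbn⟩) ≠
          E.c (lam.onE ⟨(n + Pi.single (E.c e) 1, c), hupb⟩) := by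
        rw [c_comm', c_comm']; exact Ne.symm hc
      have hsig := (hC.2 _ _ hcomp hcol).unique
        ⟨hc1 n (E.c e) c (Ne.symm hc) hsq, tL⟩
        ⟨hc2 n (E.c e) c (Ne.symm hc) hsq, tM⟩
      have hsnd : restrictTo lam n _ hsq = restrictTo mu n _ hsq :=
        sigma_snd_eq hsig
      have hb0c : (0 : Fin k → ℕ) + Pi.single c 1 ≤
          Pi.single (E.c e) 1 + Pi.single c 1 := by
        rw [zero_add]; exact le_add_self
      have hpf : (n + 0) + Pi.single c 1 ≤ Pi.single (E.c e) 1 + colourVec E x' := by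
        rw [add_zero]; exact hbc
      calc lam.onE ⟨(n, c), hbc⟩
          = lam.onE ⟨(n + 0, c), hpf⟩ := onE_congr _ (add_zero n).symm rfl
        _ = mu.onE ⟨(n + 0, c), hpf⟩ :=
            congrFun (congrArg CGM.onE hsnd) ⟨(0, c), hb0c⟩
        _ = mu.onE ⟨(n, c), hbc⟩ := onE_congr _ (add_zero n) rfl
    -- final extensionality
    refine CGM.ext' (funext fun nn => ?_) (funext fun ed => ?_)
    · obtain ⟨w, hw⟩ := nn
      by_cases hwi : w (E.c e) = 0
      · exact (slab _ w hw hwi rfl).1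
      · have hsub : w - Pi.single (E.c e) 1 ≤ colourVec E x' := reg_le hw hwi
        have heqw : Pi.single (E.c e) 1 + (w - Pi.single (E.c e) 1) = w :=
          single_add_sub w _ hwi
        have hpf : Pi.single (E.c e) 1 + (w - Pi.single (E.c e) 1) ≤
            Pi.single (E.c e) 1 + colourVec E x' := by rw [heqw]; exact hw
        calc lam.onV ⟨w, hw⟩
            = lam.onV ⟨Pi.single (E.c e) 1 + (w - Pi.single (E.c e) 1), hpf⟩ :=
              onV_congr _ heqw.symm
          _ = mu.onV ⟨Pi.single (E.c e) 1 + (w - Pi.single (E.c e) 1), hpf⟩ :=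
              hVR _ hsub hpf
          _ = mu.onV ⟨w, hw⟩ := onV_congr _ heqw
    · obtain ⟨⟨w, c⟩, hwc⟩ := ed
      by_cases hwi : w (E.c e) = 0
      · by_cases hcc : c = E.c e
        · subst hcc
          exact (slab _ w (le_trans le_self_add hwc) hwi rfl).2 hwc
        · exact slabE w (le_trans le_self_add hwc) hwi c hcc hwc
      · have hsub : (w - Pi.single (E.c e) 1) + Pi.single c 1 ≤ colourVec E x' :=
          reg_add_le hwc hwi
        have heqw : Pi.single (E.c e) 1 + (w - Pi.single (E.c e) 1) = w :=
          single_add_sub w _ hwi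
        have hpf2 : (Pi.single (E.c e) 1 + (w - Pi.single (E.c e) 1)) +
            Pi.single c 1 ≤ Pi.single (E.c e) 1 + colourVec E x' := by
          rw [heqw]; exact hwc
        calc lam.onE ⟨(w, c), hwc⟩
            = lam.onE ⟨(Pi.single (E.c e) 1 + (w - Pi.single (E.c e) 1), c),
              hpf2⟩ := onE_congr _ heqw.symm rfl
          _ = mu.onE ⟨(Pi.single (E.c e) 1 + (w - Pi.single (E.c e) 1), c),
              hpf2⟩ := hER _ _ hsub hpf2
          _ = mu.onE ⟨(w, c), hwc⟩ := onE_congr _ heqw rfl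

end Uniqueness
section Existence

variable {E : ColouredGraph k} {C : Set (MorphOf E)}

theorem single_add_sub' (w : Fin k → ℕ) (j : Fin k) :
    (Pi.single j 1 + w : Fin k → ℕ) - Pi.single j 1 = w := by
  rw [add_comm]; exact add_single_sub w j

theorem exists_aux (hC : Complete E C) (hA : Associative E C) :
    ∀ (x : List E.E) (v : E.V) (m : Fin k → ℕ), colourVec E x = m →
      x.Chain' (fun e f => E.s e = E.r f) → (∀ e ∈ x.head?, E.r e = v) →
      ∃ lam : CGM (grid k m) E, CComp E C lam ∧ Traverses lam x ∧ gRng lam = v := by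
  intro x
  induction x with
  | nil =>
    intro v m hm hch hhd
    subst hm
    have hemp : ∀ ed : (grid k (colourVec E ([] : List E.E))).E, False := by
      intro ed
      have h1 : ed.1.1 ed.1.2 + (Pi.single ed.1.2 1 : Fin k → ℕ) ed.1.2 ≤ 0 :=
        ed.2 ed.1.2
      rw [Pi.single_eq_same] at h1
      omega
    refine ⟨⟨fun _ => v, fun ed => (hemp ed).elim, fun ed => (hemp ed).elim,
      fun ed => (hemp ed).elim, fun ed => (hemp ed).elim⟩, ?_, ⟨rfl, ?_⟩, rfl⟩
    · intro p a b hab h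
      exfalso
      have h1 : p a + (Pi.single a 1 + Pi.single b 1 : Fin k → ℕ) a ≤ 0 := h a
      have h2 : (Pi.single a 1 + Pi.single b 1 : Fin k → ℕ) a =
          1 + (Pi.single b 1 : Fin k → ℕ) a := by
        rw [Pi.add_apply, Pi.single_eq_same]
      omega
    · intro l hl
      exact absurd hl (by simp)
  | cons e x' IH =>
    intro v m hm hch hhd
    rw [colourVec_cons] at hm
    subst hm
    obtain ⟨hhd', hch'⟩ := List.isChain_cons.mp hch
    obtain ⟨lam', hcc', ht', hr'⟩ := IH (E.s e) (colourVec E x') rfl hch'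
      (fun f hf => (hhd' f hf).symm)
    have hv : E.r e = v := hhd e rfl
    let S : StepCtx E C := ⟨hC, E.c e, colourVec E x', lam', hcc', e, rfl, hr'.symm⟩
    refine ⟨S.Lam hA, S.Lam_ccomp hA, ⟨rfl, ?_⟩, ?_⟩
    · intro l hl
      cases l with
      | zero =>
        have hbound : (0 : Fin k → ℕ) + Pi.single (E.c e) 1 ≤
            Pi.single (E.c e) 1 + colourVec E x' := by
          rw [zero_add]; exact le_self_add
        have hval : (S.Lam hA).onE ⟨(0, E.c e), hbound⟩ = e :=
          (S.onE'_slab_i (h := hbound) rfl rfl zero_le).trans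
            (S.alpha_zero zero_le rfl)
        exact ⟨hbound, hval⟩
      | succ l =>
        have hl' : l < x'.length := by simpa using hl
        obtain ⟨hb, heq⟩ := ht'.2 l hl'
        have hb2 : (Pi.single (E.c e) 1 + colourVec E (x'.take l)) +
            Pi.single (E.c (x'.get ⟨l, hl'⟩)) 1 ≤
            Pi.single (E.c e) 1 + colourVec E x' := by
          rw [add_assoc]; exact add_le_add_right hb _
        have hne : (Pi.single (E.c e) 1 + colourVec E (x'.take l) : Fin k → ℕ)
            (E.c e) ≠ 0 := by
          simp only [Pi.add_apply, Pi.single_eq_same]; omega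
        have hpos : (Pi.single (E.c e) 1 + colourVec E (x'.take l) : Fin k → ℕ) -
            Pi.single (E.c e) 1 = colourVec E (x'.take l) := single_add_sub' _ _
        have hsub : ((Pi.single (E.c e) 1 + colourVec E (x'.take l) : Fin k → ℕ) -
            Pi.single (E.c e) 1) + Pi.single (E.c (x'.get ⟨l, hl'⟩)) 1 ≤
            colourVec E x' := by
          rw [hpos]; exact hb
        have hval : (S.Lam hA).onE ⟨(Pi.single (E.c e) 1 + colourVec E (x'.take l),
            E.c (x'.get ⟨l, hl'⟩)), hb2⟩ = x'.get ⟨l, hl'⟩ :=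
          ((S.onE'_reg (h := hb2) hne hsub).trans
            (onE_congr _ hpos rfl)).trans heq
        exact ⟨hb2, hval⟩
    · calc gRng (S.Lam hA) = E.r (S.alpha 0 zero_le rfl).1 :=
            S.onV'_slab (hn := zero_le) rfl zero_le
        _ = E.r e := congrArg E.r (S.alpha_zero zero_le rfl)
        _ = v := hv

end Existence

/-- Every finite path in `E` traverses a unique `C`-compatible coloured-graph
morphism `λ_x : E_{k,q(c(x))} → E`. -/
theorem path_traverses_unique_morphism {k : ℕ} {E : ColouredGraph k}
    {C : Set (MorphOf E)} (hC : Complete E C) (hA : Associative E C)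
    (x : FinPath E) :
    ∃! lam : CGM (grid k (colourVec E x.edges)) E,
      CComp E C lam ∧ Traverses lam x.edges ∧ gRng lam = x.rng := by
  obtain ⟨lam, h1, h2, h3⟩ := exists_aux hC hA x.edges x.rng
    (colourVec E x.edges) rfl x.chain x.head_rng
  exact ⟨lam, ⟨h1, h2, h3⟩, fun mu ⟨m1, m2, m3⟩ =>
    uniq_aux hC x.edges x.rng _ rfl x.chain x.head_rng mu lam
      m1 m2 m3 h1 h2 h3⟩

end Paper
end

section
/- Let Λ be a k-graph. Define the skeleton E_Λ (vertices Λ^0, edges the paths of degree e_i for each i, coloured by i) and let C_Λ be the collection of squares φ_λ for λ ∈ Λ^{e_i+e_j} (i ≠ j) given by φ_λ(n) = λ(n) and φ_λ(n + v_i) = λ(n, n+e_i). Then C_Λ is a complete collection of squares in E_Λ which is associative. -/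
namespace Paper


/-- A `k`-graph structure on object type `Obj` and morphism type `Hom`:
a countable category with a degree functor to `ℕ^k` satisfying the
unique factorisation property.  `comp μ ν` is the composite "μ then ν",
meaningful when `src μ = rng ν`. -/
structure KGraph (k : ℕ) (Obj Hom : Type) where
  src : Hom → Obj
  rng : Hom → Obj
  comp : Hom → Hom → Hom
  idm : Obj → Hom
  d : Hom → Fin k → ℕ
  countObj : Countable Obj
  countHom : Countable Hom
  src_comp : ∀ μ ν, src μ = rng ν → src (comp μ ν) = src ν
  rng_comp : ∀ μ ν, src μ = rng ν → rng (comp μ ν) = rng μ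
  comp_assoc : ∀ l μ ν, src l = rng μ → src μ = rng ν →
    comp (comp l μ) ν = comp l (comp μ ν)
  src_idm : ∀ v, src (idm v) = v
  rng_idm : ∀ v, rng (idm v) = v
  comp_idm : ∀ μ, comp μ (idm (src μ)) = μ
  idm_comp : ∀ μ, comp (idm (rng μ)) μ = μ
  d_comp : ∀ μ ν, src μ = rng ν → d (comp μ ν) = d μ + d ν
  d_idm : ∀ v, d (idm v) = 0
  factor : ∀ (lam : Hom) (m n : Fin k → ℕ), d lam = m + n →
    ∃! p : Hom × Hom, src p.1 = rng p.2 ∧ comp p.1 p.2 = lam ∧ d p.1 = m ∧ d p.2 = n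

variable {k : ℕ} {Obj Hom : Type}

/-- `IsSegment Λ lam seg p q` says that `seg = lam(p,q)`, i.e. `seg` is the middle
factor of `lam` in a factorisation `lam = a ⬝ seg ⬝ b` with `d a = p`, `d seg = q - p`. -/
def IsSegment (Λ : KGraph k Obj Hom) (lam seg : Hom) (p q : Fin k → ℕ) : Prop :=
  ∃ a b : Hom, Λ.src a = Λ.rng seg ∧ Λ.src seg = Λ.rng b ∧
    Λ.comp a (Λ.comp seg b) = lam ∧ Λ.d a = p ∧ Λ.d seg = q - p

/-- Aperiodicity in the finite-path formulation of Robertson–Sims. -/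
def Aperiodic (Λ : KGraph k Obj Hom) : Prop :=
  ∀ (v : Obj) (m n : Fin k → ℕ), m ≠ n → ∃ lam : Hom,
    Λ.rng lam = v ∧ m ⊔ n ≤ Λ.d lam ∧
    ∀ s1 s2 : Hom, IsSegment Λ lam s1 m (m + (Λ.d lam - (m ⊔ n))) →
      IsSegment Λ lam s2 n (n + (Λ.d lam - (m ⊔ n))) → s1 ≠ s2

def NoSources (Λ : KGraph k Obj Hom) : Prop :=
  ∀ (v : Obj) (i : Fin k), ∃ h : Hom, Λ.rng h = v ∧ Λ.d h = Pi.single i 1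

def RowFinite (Λ : KGraph k Obj Hom) : Prop :=
  ∀ (v : Obj) (i : Fin k), {h : Hom | Λ.rng h = v ∧ Λ.d h = Pi.single i 1}.Finite

def Cofinal (Λ : KGraph k Obj Hom) : Prop :=
  ∀ v w : Obj, ∃ n : Fin k → ℕ, ∀ lam : Hom, Λ.rng lam = w → Λ.d lam = n →
    ∃ μ : Hom, Λ.rng μ = v ∧ Λ.src μ = Λ.src lam

/-- A degree-preserving functor between `k`-graphs. -/
structure KFunctor {O H O' H' : Type} (Λ : KGraph k O H) (Γ : KGraph k O' H') where
  onObj : O → O'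
  onHom : H → H'
  rng_comm : ∀ h, Γ.rng (onHom h) = onObj (Λ.rng h)
  src_comm : ∀ h, Γ.src (onHom h) = onObj (Λ.src h)
  idm_comm : ∀ v, onHom (Λ.idm v) = Γ.idm (onObj v)
  comp_comm : ∀ μ ν, Λ.src μ = Λ.rng ν → onHom (Λ.comp μ ν) = Γ.comp (onHom μ) (onHom ν)
  d_comm : ∀ h, Γ.d (onHom h) = Λ.d h

/-- An infinite path in a `k`-graph: a `k`-graph morphism from `Ω_k`. -/
structure InfPath (Λ : KGraph k Obj Hom) where
  vert : (Fin k → ℕ) → Obj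
  seg : ∀ p q : Fin k → ℕ, p ≤ q → Hom
  rng_seg : ∀ p q h, Λ.rng (seg p q h) = vert p
  src_seg : ∀ p q h, Λ.src (seg p q h) = vert q
  d_seg : ∀ p q h, Λ.d (seg p q h) = q - p
  comp_seg : ∀ p q r (h1 : p ≤ q) (h2 : q ≤ r),
    Λ.comp (seg p q h1) (seg q r h2) = seg p r (h1.trans h2)

/-- The shift `σ^p` on infinite paths. -/
def InfPath.shift (Λ : KGraph k Obj Hom) (p : Fin k → ℕ) (x : InfPath Λ) : InfPath Λ where
  vert q := x.vert (p + q)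
  seg q r h := x.seg (p + q) (p + r) (add_le_add (le_refl p) h)
  rng_seg q r h := x.rng_seg _ _ _
  src_seg q r h := x.src_seg _ _ _
  d_seg q r h := by
    rw [x.d_seg]
    funext i
    simp [Nat.add_sub_add_left]
  comp_seg q r t h1 h2 := x.comp_seg _ _ _ _ _



variable {k : ℕ}

/-- The skeleton of a `k`-graph: vertices are the objects and edges are the
morphisms of degree `e_i`, coloured by `i`. -/
noncomputable def skel {O H : Type} (Λ : KGraph k O H) : ColouredGraph k where
  V := O
  E := {h : H // ∃ i : Fin k, Λ.d h = Pi.single i 1}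
  r e := Λ.rng e.1
  s e := Λ.src e.1
  c e := Classical.choose e.2

/-- The collection `C_Λ` of commuting squares of a `k`-graph: the squares
`φ_λ` for `λ ∈ Λ^{e_i+e_j}` (`i ≠ j`), given on vertices by `φ_λ(n) = λ(n)`
and on edges by `φ_λ(n + v_l) = λ(n, n + e_l)`. -/
noncomputable def skelSquares {O H : Type} (Λ : KGraph k O H) :
    Set (MorphOf (skel Λ)) :=
  {ψ | ∃ (i j : Fin k), i ≠ j ∧ ∃ lam : H,
    Λ.d lam = Pi.single i 1 + Pi.single j 1 ∧
    ψ.1 = Pi.single i 1 + Pi.single j 1 ∧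
    (∀ (n : Fin k → ℕ) (hn : n ≤ ψ.1), ∃ a : H,
      IsSegment Λ lam a 0 n ∧ ψ.2.onV ⟨n, hn⟩ = Λ.src a) ∧
    (∀ (n : Fin k → ℕ) (l : Fin k) (hn : n + Pi.single l 1 ≤ ψ.1),
      IsSegment Λ lam (ψ.2.onE ⟨(n, l), hn⟩).1 n (n + Pi.single l 1))}


section Aux

variable {O H : Type} (Λ : KGraph k O H)

theorem CGM.ext'_s12 {E F : ColouredGraph k} {φ ψ : CGM E F}
    (h1 : φ.onV = ψ.onV) (h2 : φ.onE = ψ.onE) : φ = ψ := by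
  cases φ; cases ψ; cases h1; cases h2; rfl

theorem single_one_inj {i j : Fin k} (h : (Pi.single i 1 : Fin k → ℕ) = Pi.single j 1) :
    i = j := by
  by_contra hne
  have := congrFun h i
  rw [Pi.single_eq_same, Pi.single_eq_of_ne hne] at this
  exact one_ne_zero this

theorem d_eq_c (e : (skel Λ).E) : Λ.d e.1 = Pi.single ((skel Λ).c e) 1 :=
  Classical.choose_spec e.2

variable {Λ}

theorem eq_idm_of_d_zero {a : H} (ha : Λ.d a = 0) : a = Λ.idm (Λ.rng a) := by
  obtain ⟨p, hp, hu⟩ := Λ.factor a 0 0 (by rw [ha, add_zero])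
  have h1 := hu (Λ.idm (Λ.rng a), a)
    ⟨by rw [Λ.src_idm], Λ.idm_comp a, Λ.d_idm _, ha⟩
  have h2 := hu (a, Λ.idm (Λ.src a))
    ⟨by rw [Λ.rng_idm], Λ.comp_idm a, ha, Λ.d_idm _⟩
  have := h1.trans h2.symm
  exact (congrArg Prod.fst this).symm

theorem src_eq_rng_of_d_zero {a : H} (ha : Λ.d a = 0) : Λ.src a = Λ.rng a := by
  conv_lhs => rw [eq_idm_of_d_zero ha]
  rw [Λ.src_idm]

theorem comp_eq_left {a x : H} (ha : Λ.d a = 0) (h : Λ.src a = Λ.rng x) :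
    Λ.comp a x = x := by
  have h2 : Λ.rng a = Λ.rng x := (src_eq_rng_of_d_zero ha).symm.trans h
  conv_lhs => rw [eq_idm_of_d_zero ha, h2]
  exact Λ.idm_comp x

theorem comp_eq_right {b x : H} (hb : Λ.d b = 0) (h : Λ.src x = Λ.rng b) :
    Λ.comp x b = x := by
  have h2 : b = Λ.idm (Λ.src x) := by
    rw [eq_idm_of_d_zero hb, h]
  rw [h2]; exact Λ.comp_idm x

theorem factor_unique {lam a b a' b' : H} {m n : Fin k → ℕ} (hd : Λ.d lam = m + n)
    (hab : Λ.src a = Λ.rng b) (hc : Λ.comp a b = lam) (hda : Λ.d a = m) (hdb : Λ.d b = n)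
    (hab' : Λ.src a' = Λ.rng b') (hc' : Λ.comp a' b' = lam) (hda' : Λ.d a' = m)
    (hdb' : Λ.d b' = n) : a = a' ∧ b = b' := by
  obtain ⟨p, hp, hu⟩ := Λ.factor lam m n hd
  have h1 := hu (a, b) ⟨hab, hc, hda, hdb⟩
  have h2 := hu (a', b') ⟨hab', hc', hda', hdb'⟩
  have := h1.trans h2.symm
  exact ⟨congrArg Prod.fst this, congrArg Prod.snd this⟩

theorem seg_le {lam s : H} {p q : Fin k → ℕ} (hpq : p ≤ q)
    (hs : IsSegment Λ lam s p q) : q ≤ Λ.d lam := by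
  obtain ⟨a, b, h1, h2, h3, h4, h5⟩ := hs
  intro i
  show q i ≤ Λ.d lam i
  have hd : Λ.d lam = Λ.d a + (Λ.d s + Λ.d b) := by
    rw [← h3, Λ.d_comp _ _ (by rw [Λ.rng_comp _ _ h2]; exact h1), Λ.d_comp _ _ h2]
  have h6 := congrFun hd i
  rw [h4, h5] at h6
  simp only [Pi.add_apply, Pi.sub_apply] at h6
  have h7 : p i ≤ q i := hpq i
  omega

theorem seg_db {lam s a b : H} {p q : Fin k → ℕ} (hpq : p ≤ q)
    (h1 : Λ.src a = Λ.rng s) (h2 : Λ.src s = Λ.rng b)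
    (h3 : Λ.comp a (Λ.comp s b) = lam) (h4 : Λ.d a = p) (h5 : Λ.d s = q - p) :
    Λ.d b = Λ.d lam - q ∧ Λ.d (Λ.comp s b) = Λ.d lam - p := by
  have hd : Λ.d lam = Λ.d a + (Λ.d s + Λ.d b) := by
    rw [← h3, Λ.d_comp _ _ (by rw [Λ.rng_comp _ _ h2]; exact h1), Λ.d_comp _ _ h2]
  constructor
  · funext i
    have h6 := congrFun hd i
    rw [h4, h5] at h6
    simp only [Pi.add_apply, Pi.sub_apply] at h6 ⊢
    have h7 : p i ≤ q i := hpq i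
    omega
  · rw [Λ.d_comp _ _ h2, h5]
    funext i
    have h6 := congrFun hd i
    rw [h4, h5] at h6
    simp only [Pi.add_apply, Pi.sub_apply] at h6 ⊢
    have h7 : p i ≤ q i := hpq i
    omega

theorem seg_unique {lam s s' : H} {p q : Fin k → ℕ} (hpq : p ≤ q)
    (hs : IsSegment Λ lam s p q) (hs' : IsSegment Λ lam s' p q) : s = s' := by
  obtain ⟨a, b, h1, h2, h3, h4, h5⟩ := hs
  obtain ⟨a', b', h1', h2', h3', h4', h5'⟩ := hs'
  obtain ⟨hdb, hdr⟩ := seg_db hpq h1 h2 h3 h4 h5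
  obtain ⟨hdb', hdr'⟩ := seg_db hpq h1' h2' h3' h4' h5'
  have hdlam : Λ.d lam = p + (Λ.d lam - p) := by
    funext i
    have h6 : q i ≤ Λ.d lam i := (seg_le hpq ⟨a, b, h1, h2, h3, h4, h5⟩) i
    have h7 : p i ≤ q i := hpq i
    simp only [Pi.add_apply, Pi.sub_apply]
    omega
  have key := factor_unique hdlam
    (by rw [Λ.rng_comp _ _ h2]; exact h1) h3 h4 hdr
    (by rw [Λ.rng_comp _ _ h2']; exact h1') h3' h4' hdr'
  have hrest : Λ.comp s b = Λ.comp s' b' := key.2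
  have hdrest : Λ.d (Λ.comp s b) = (q - p) + (Λ.d lam - q) := by
    rw [Λ.d_comp _ _ h2, h5, hdb]
  exact (factor_unique hdrest h2 rfl h5 hdb h2' hrest.symm h5' hdb').1

theorem seg_exists {lam : H} {p q : Fin k → ℕ} (hpq : p ≤ q) (hq : q ≤ Λ.d lam) :
    ∃ s, IsSegment Λ lam s p q := by
  have hp : p ≤ Λ.d lam := hpq.trans hq
  obtain ⟨⟨a, rest⟩, ⟨ha1, ha2, ha3, ha4⟩, _⟩ := Λ.factor lam p (Λ.d lam - p)
    (by funext i; simp only [Pi.add_apply, Pi.sub_apply]; have h6 : p i ≤ Λ.d lam i := hp i; omega)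
  obtain ⟨⟨s, b⟩, ⟨hb1, hb2, hb3, hb4⟩, _⟩ := Λ.factor rest (q - p) (Λ.d lam - q)
    (by rw [ha4]; funext i; simp only [Pi.add_apply, Pi.sub_apply]
        have h6 : q i ≤ Λ.d lam i := hq i; have h7 : p i ≤ q i := hpq i; omega)
  refine ⟨s, a, b, ?_, hb1, ?_, ha3, hb3⟩
  · rw [ha1, ← hb2, Λ.rng_comp _ _ hb1]
  · rw [hb2, ha2]

/-- seg composition: sources match and the composite is a segment. -/
theorem seg_comp {lam s t : H} {p q r : Fin k → ℕ} (hpq : p ≤ q) (hqr : q ≤ r)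
    (hs : IsSegment Λ lam s p q) (ht : IsSegment Λ lam t q r) :
    Λ.src s = Λ.rng t ∧ IsSegment Λ lam (Λ.comp s t) p r := by
  obtain ⟨a, b, h1, h2, h3, h4, h5⟩ := hs
  obtain ⟨a', b', h1', h2', h3', h4', h5'⟩ := ht
  obtain ⟨hdb, _⟩ := seg_db hpq h1 h2 h3 h4 h5
  obtain ⟨hdb', hdr'⟩ := seg_db hqr h1' h2' h3' h4' h5'
  have hdlam : Λ.d lam = q + (Λ.d lam - q) := by
    funext i
    have h6 : r i ≤ Λ.d lam i := (seg_le hqr ⟨a', b', h1', h2', h3', h4', h5'⟩) i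
    have h7 : q i ≤ r i := hqr i
    simp only [Pi.add_apply, Pi.sub_apply]
    omega
  have hdas : Λ.d (Λ.comp a s) = q := by
    rw [Λ.d_comp _ _ h1, h4, h5]
    funext i
    simp only [Pi.add_apply, Pi.sub_apply]
    have h6 : p i ≤ q i := hpq i
    omega
  have hcsb : Λ.comp (Λ.comp a s) b = lam := by
    rw [Λ.comp_assoc _ _ _ h1 h2]; exact h3
  have key := factor_unique hdlam
    (by rw [Λ.src_comp _ _ h1]; exact h2) hcsb hdas hdb
    (by rw [Λ.rng_comp _ _ h2']; exact h1') h3' h4'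
    (by rw [Λ.d_comp _ _ h2', h5', hdb']
        funext i
        have h6 : r i ≤ Λ.d lam i := (seg_le hqr ⟨a', b', h1', h2', h3', h4', h5'⟩) i
        have h7 : q i ≤ r i := hqr i
        simp only [Pi.add_apply, Pi.sub_apply]
        omega)
  have hst : Λ.src s = Λ.rng t := by
    have h8 := h1'
    rw [← key.1, Λ.src_comp _ _ h1] at h8
    exact h8
  refine ⟨hst, a, b', by rw [Λ.rng_comp _ _ hst]; exact h1,
    by rw [Λ.src_comp _ _ hst]; exact h2', ?_, h4, ?_⟩
  · have : Λ.comp (Λ.comp s t) b' = Λ.comp s (Λ.comp t b') := Λ.comp_assoc _ _ _ hst h2'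
    rw [this, ← key.2, h3]
  · rw [Λ.d_comp _ _ hst, h5, h5']
    funext i
    simp only [Pi.add_apply, Pi.sub_apply]
    have h6 : p i ≤ q i := hpq i; have h7 : q i ≤ r i := hqr i
    omega

theorem seg_full {lam s : H} (hs : IsSegment Λ lam s 0 (Λ.d lam)) : s = lam := by
  obtain ⟨a, b, h1, h2, h3, h4, h5⟩ := hs
  have hds : Λ.d s = Λ.d lam := by
    rw [h5]; funext i; simp only [Pi.sub_apply, Pi.zero_apply]; omega
  have hdb : Λ.d b = 0 := by
    have hd : Λ.d lam = Λ.d a + (Λ.d s + Λ.d b) := by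
      rw [← h3, Λ.d_comp _ _ (by rw [Λ.rng_comp _ _ h2]; exact h1), Λ.d_comp _ _ h2]
    rw [h4, hds] at hd
    funext i
    have := congrFun hd i
    simp only [Pi.add_apply, Pi.zero_apply] at this ⊢
    omega
  have hsb : Λ.comp s b = s := comp_eq_right hdb h2
  rw [← h3, hsb, comp_eq_left h4 (hsb ▸ h1)]

theorem seg_rng {lam s s' : H} {p q q' : Fin k → ℕ} (hpq : p ≤ q) (hpq' : p ≤ q')
    (hs : IsSegment Λ lam s p q) (hs' : IsSegment Λ lam s' p q') :
    Λ.rng s = Λ.rng s' := by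
  obtain ⟨a, b, h1, h2, h3, h4, h5⟩ := hs
  obtain ⟨a', b', h1', h2', h3', h4', h5'⟩ := hs'
  obtain ⟨_, hdr⟩ := seg_db hpq h1 h2 h3 h4 h5
  obtain ⟨_, hdr'⟩ := seg_db hpq' h1' h2' h3' h4' h5'
  have hdlam : Λ.d lam = p + (Λ.d lam - p) := by
    funext i
    have h6 : q i ≤ Λ.d lam i := (seg_le hpq ⟨a, b, h1, h2, h3, h4, h5⟩) i
    have h7 : p i ≤ q i := hpq i
    simp only [Pi.add_apply, Pi.sub_apply]
    omega
  have key := factor_unique hdlam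
    (by rw [Λ.rng_comp _ _ h2]; exact h1) h3 h4 hdr
    (by rw [Λ.rng_comp _ _ h2']; exact h1') h3' h4' hdr'
  rw [← h1, ← h1', key.1]

theorem pi_add_sub (n v : Fin k → ℕ) : n + v - n = v := by
  funext i
  simp only [Pi.sub_apply, Pi.add_apply]
  omega

open Classical in
/-- The segment `lam(p,q)`, defined by choice. -/
noncomputable def segOf (Λ : KGraph k O H) (lam : H) (p q : Fin k → ℕ) : H :=
  if h : ∃ s, IsSegment Λ lam s p q then h.choose else lam

theorem segOf_isSeg {lam : H} {p q : Fin k → ℕ} (hpq : p ≤ q) (hq : q ≤ Λ.d lam) :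
    IsSegment Λ lam (segOf Λ lam p q) p q := by
  have h := seg_exists (Λ := Λ) (lam := lam) hpq hq
  rw [segOf, dif_pos h]
  exact h.choose_spec

theorem segOf_eq {lam s : H} {p q : Fin k → ℕ} (hpq : p ≤ q)
    (hs : IsSegment Λ lam s p q) : segOf Λ lam p q = s := by
  have h : ∃ s, IsSegment Λ lam s p q := ⟨s, hs⟩
  rw [segOf, dif_pos h]
  exact seg_unique hpq h.choose_spec hs

theorem d_segOf {lam : H} {p q : Fin k → ℕ} (hpq : p ≤ q) (hq : q ≤ Λ.d lam) :
    Λ.d (segOf Λ lam p q) = q - p := by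
  obtain ⟨a, b, _, _, _, _, h5⟩ := segOf_isSeg (Λ := Λ) (lam := lam) hpq hq
  exact h5

/-- The coloured-graph morphism `E_{k,m} → E_Λ` determined by `lam ∈ Λ^m`. -/
noncomputable def pathCGM (Λ : KGraph k O H) (lam : H) (m : Fin k → ℕ)
    (hd : Λ.d lam = m) : CGM (grid k m) (skel Λ) where
  onV n := Λ.src (segOf Λ lam 0 n.1)
  onE e := ⟨segOf Λ lam e.1.1 (e.1.1 + Pi.single e.1.2 1),
    ⟨e.1.2, by
      rw [d_segOf (le_add_of_nonneg_right zero_le) (by rw [hd]; exact e.2),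
        pi_add_sub]⟩⟩
  r_comm e := by
    have hn : e.1.1 ≤ Λ.d lam := by
      rw [hd]; exact (le_add_of_nonneg_right zero_le).trans e.2
    have hs1 := segOf_isSeg (Λ := Λ) (lam := lam) (show 0 ≤ e.1.1 from zero_le) hn
    have hs2 := segOf_isSeg (Λ := Λ) (lam := lam)
      (le_add_of_nonneg_right zero_le : e.1.1 ≤ e.1.1 + Pi.single e.1.2 1)
      (by rw [hd]; exact e.2)
    exact ((seg_comp zero_le (le_add_of_nonneg_right zero_le) hs1 hs2).1).symm
  s_comm e := by
    have hn : e.1.1 ≤ Λ.d lam := by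
      rw [hd]; exact (le_add_of_nonneg_right zero_le).trans e.2
    have hs1 := segOf_isSeg (Λ := Λ) (lam := lam) (show 0 ≤ e.1.1 from zero_le) hn
    have hs2 := segOf_isSeg (Λ := Λ) (lam := lam)
      (le_add_of_nonneg_right zero_le : e.1.1 ≤ e.1.1 + Pi.single e.1.2 1)
      (by rw [hd]; exact e.2)
    have hc := seg_comp zero_le (le_add_of_nonneg_right zero_le) hs1 hs2
    have he := segOf_eq zero_le hc.2
    show Λ.src _ = Λ.src (segOf Λ lam 0 (e.1.1 + Pi.single e.1.2 1))
    rw [he, Λ.src_comp _ _ hc.1]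
  c_comm e := by
    have h1 := d_eq_c Λ ⟨segOf Λ lam e.1.1 (e.1.1 + Pi.single e.1.2 1),
      ⟨e.1.2, by
        rw [d_segOf (le_add_of_nonneg_right zero_le) (by rw [hd]; exact e.2),
          pi_add_sub]⟩⟩
    have h2 : Λ.d (segOf Λ lam e.1.1 (e.1.1 + Pi.single e.1.2 1)) = Pi.single e.1.2 1 := by
      rw [d_segOf (le_add_of_nonneg_right zero_le) (by rw [hd]; exact e.2), pi_add_sub]
    exact single_one_inj (h1.symm.trans h2)

theorem trav_comp {φ : MorphOf (skel Λ)} {lam : H} (hd : Λ.d lam = φ.1)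
    (hE : ∀ (n : Fin k → ℕ) (l : Fin k) (hn : n + Pi.single l 1 ≤ φ.1),
      IsSegment Λ lam (φ.2.onE ⟨(n, l), hn⟩).1 n (n + Pi.single l 1))
    {e f : (skel Λ).E} (htr : Traverses φ.2 [e, f]) :
    Λ.src e.1 = Λ.rng f.1 ∧ Λ.comp e.1 f.1 = lam ∧
      φ.1 = Pi.single ((skel Λ).c e) 1 + Pi.single ((skel Λ).c f) 1 := by
  obtain ⟨hcv, hget⟩ := htr
  have hcv2 : Pi.single ((skel Λ).c e) 1 + Pi.single ((skel Λ).c f) 1 = φ.1 := by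
    rw [← hcv]; simp [colourVec]
  obtain ⟨hle0, heq0⟩ := hget 0 (by norm_num)
  obtain ⟨hle1, heq1⟩ := hget 1 (by norm_num)
  have seg_e : IsSegment Λ lam e.1 0 (Pi.single ((skel Λ).c e) 1) := by
    have h := hE _ _ hle0
    rw [heq0] at h
    simpa [colourVec] using h
  have seg_f : IsSegment Λ lam f.1 (Pi.single ((skel Λ).c e) 1)
      (Pi.single ((skel Λ).c e) 1 + Pi.single ((skel Λ).c f) 1) := by
    have h := hE _ _ hle1
    rw [heq1] at h
    simpa [colourVec] using h
  have h1 := seg_comp zero_le (le_add_of_nonneg_right zero_le) seg_e seg_f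
  have hfull : IsSegment Λ lam (Λ.comp e.1 f.1) 0 (Λ.d lam) := by
    rw [hd, ← hcv2]; exact h1.2
  exact ⟨h1.1, seg_full hfull, hcv2.symm⟩

theorem crel_spec {e f f' e' : (skel Λ).E}
    (hcr : CRel (skel Λ) (skelSquares Λ) e f f' e') :
    Λ.src e.1 = Λ.rng f.1 ∧ Λ.src f'.1 = Λ.rng e'.1 ∧
      Λ.comp e.1 f.1 = Λ.comp f'.1 e'.1 := by
  obtain ⟨hc1, hc2, φ, hφ, htr1, htr2⟩ := hcr
  obtain ⟨i, j, hij, lam, hdlam, hψ1, hV, hEd⟩ := hφ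
  have hd : Λ.d lam = φ.1 := hdlam.trans hψ1.symm
  have t1 := trav_comp hd hEd htr1
  have t2 := trav_comp hd hEd htr2
  exact ⟨t1.1, t2.1, t1.2.1.trans t2.2.1.symm⟩


end Aux

/-- The collection `C_Λ` of commuting squares of a `k`-graph is a complete
collection of squares in the skeleton `E_Λ`, and it is associative. -/
theorem skelSquares_complete_associative {k : ℕ} {O H : Type} (Λ : KGraph k O H) :
    Complete (skel Λ) (skelSquares Λ) ∧ Associative (skel Λ) (skelSquares Λ) := by
  constructor
  · -- Completeness
    constructor
    · rintro φ ⟨i, j, hij, lam, hdlam, hψ1, -, -⟩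
      exact ⟨i, j, hij, hψ1⟩
    · intro e f hsf hcf
      have hsf' : Λ.src e.1 = Λ.rng f.1 := hsf
      have hd : Λ.d (Λ.comp e.1 f.1) =
          Pi.single ((skel Λ).c e) 1 + Pi.single ((skel Λ).c f) 1 := by
        rw [Λ.d_comp _ _ hsf', d_eq_c Λ e, d_eq_c Λ f]
      have seg_e : IsSegment Λ (Λ.comp e.1 f.1) e.1 0 (Pi.single ((skel Λ).c e) 1) := by
        refine ⟨Λ.idm (Λ.rng e.1), f.1, Λ.src_idm _, hsf', ?_, Λ.d_idm _, ?_⟩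
        · rw [← Λ.rng_comp e.1 f.1 hsf']; exact Λ.idm_comp _
        · rw [d_eq_c Λ e]; funext i
          simp only [Pi.sub_apply, Pi.zero_apply, Nat.sub_zero]
      have seg_f : IsSegment Λ (Λ.comp e.1 f.1) f.1 (Pi.single ((skel Λ).c e) 1)
          (Pi.single ((skel Λ).c e) 1 + Pi.single ((skel Λ).c f) 1) := by
        refine ⟨e.1, Λ.idm (Λ.src f.1), hsf', (Λ.rng_idm _).symm, ?_, d_eq_c Λ e, ?_⟩
        · rw [Λ.comp_idm]
        · rw [d_eq_c Λ f, pi_add_sub]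
      refine ⟨⟨_, pathCGM Λ (Λ.comp e.1 f.1) _ hd⟩,
        ⟨⟨(skel Λ).c e, (skel Λ).c f, hcf, Λ.comp e.1 f.1, hd, rfl, ?_, ?_⟩, ?_, ?_⟩, ?_⟩
      · intro n hn
        exact ⟨segOf Λ _ 0 n, segOf_isSeg (show 0 ≤ n from zero_le) (by rw [hd]; exact hn), rfl⟩
      · intro n l hn
        exact segOf_isSeg (le_add_of_nonneg_right zero_le) (by rw [hd]; exact hn)
      · -- colourVec
        simp [colourVec]
      · -- traversal conditions
        intro l hl
        simp only [List.length_cons, List.length_nil] at hl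
        interval_cases l
        · refine ⟨?_, ?_⟩
          · show colourVec (skel Λ) [] + _ ≤ _
            simp only [colourVec, List.take_zero, List.map_nil, List.sum_nil, zero_add, List.get]
            exact le_add_of_nonneg_right zero_le
          · apply Subtype.ext
            show segOf Λ (Λ.comp e.1 f.1) _ _ = _
            simp only [colourVec, List.take_zero, List.map_nil, List.sum_nil, List.get]
            rw [show ((0 : Fin k → ℕ) + Pi.single ((skel Λ).c e) 1) =
              Pi.single ((skel Λ).c e) 1 from zero_add _]
            exact segOf_eq zero_le seg_e
        · refine ⟨?_, ?_⟩
          · show colourVec (skel Λ) [e] + _ ≤ _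
            simp only [colourVec, List.take_succ_cons, List.take_zero, List.map_cons,
              List.map_nil, List.sum_cons, List.sum_nil, add_zero, List.get]
            exact le_refl _
          · apply Subtype.ext
            show segOf Λ (Λ.comp e.1 f.1) _ _ = _
            simp only [colourVec, List.take_succ_cons, List.take_zero, List.map_cons,
              List.map_nil, List.sum_cons, List.sum_nil, add_zero, List.get]
            exact segOf_eq (le_add_of_nonneg_right zero_le) seg_f
      · -- uniqueness
        rintro ⟨m', ψ⟩ ⟨⟨i', j', hij', lam', hdlam', hψ1', hV', hE'⟩, htr⟩
        have hd' : Λ.d lam' = m' := hdlam'.trans hψ1'.symm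
        have t := trav_comp hd' hE' htr
        have hlam' : lam' = Λ.comp e.1 f.1 := t.2.1.symm
        have hm' : m' = Pi.single ((skel Λ).c e) 1 + Pi.single ((skel Λ).c f) 1 := t.2.2
        subst hm'
        have hψ : ψ = pathCGM Λ (Λ.comp e.1 f.1) _ hd := by
          apply CGM.ext'_s12
          · funext x
            obtain ⟨n, hn⟩ := x
            obtain ⟨a, ha, hva⟩ := hV' n hn
            rw [hlam'] at ha
            show ψ.onV _ = Λ.src (segOf Λ (Λ.comp e.1 f.1) 0 n)
            rw [hva, segOf_eq (show 0 ≤ n from zero_le) ha]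
          · funext x
            obtain ⟨⟨n, l⟩, hn⟩ := x
            apply Subtype.ext
            have hseg := hE' n l hn
            rw [hlam'] at hseg
            show (ψ.onE _).1 = segOf Λ (Λ.comp e.1 f.1) n (n + Pi.single l 1)
            rw [segOf_eq (le_add_of_nonneg_right zero_le) hseg]
        rw [hψ]
  · -- Associativity
    intro f g h f1 f2 g1 g2 h1 h2 f1' f2' g1' g2' h1' h2' hsfg hsgh hcfg hcgh hcfh
      cr1 cr2 cr3 cr4 cr5 cr6
    have hsfg' : Λ.src f.1 = Λ.rng g.1 := hsfg
    have hsgh' : Λ.src g.1 = Λ.rng h.1 := hsgh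
    obtain ⟨sc1, sd1, e1⟩ := crel_spec cr1
    obtain ⟨sc2, sd2, e2⟩ := crel_spec cr2
    obtain ⟨sc3, sd3, e3⟩ := crel_spec cr3
    obtain ⟨sc4, sd4, e4⟩ := crel_spec cr4
    obtain ⟨sc5, sd5, e5⟩ := crel_spec cr5
    obtain ⟨sc6, sd6, e6⟩ := crel_spec cr6
    -- derived composability
    have sg2f2' : Λ.src g2'.1 = Λ.rng f2'.1 := by
      have hx : Λ.src (Λ.comp h2'.1 g2'.1) = Λ.src (Λ.comp g1'.1 h1'.1) := by rw [e3]
      rw [Λ.src_comp _ _ sd3, Λ.src_comp _ _ sc3] at hx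
      rw [hx]; exact sd2
    have hg2f1 : Λ.rng g2.1 = Λ.rng f1.1 := by
      have hx : Λ.rng (Λ.comp g2.1 f2.1) = Λ.rng (Λ.comp f1.1 g1.1) := by rw [e6]
      rw [Λ.rng_comp _ _ sd6, Λ.rng_comp _ _ sc6] at hx
      exact hx
    have sh2g2 : Λ.src h2.1 = Λ.rng g2.1 := sd5.trans hg2f1.symm
    -- the two factorisations of the total path
    have P1 : Λ.comp (Λ.comp f.1 g.1) h.1 = Λ.comp h2'.1 (Λ.comp g2'.1 f2'.1) := by
      rw [e1, Λ.comp_assoc _ _ _ sd1 sc2, e2, ← Λ.comp_assoc _ _ _ sc3 sd2, e3,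
        Λ.comp_assoc _ _ _ sd3 sg2f2']
    have P2 : Λ.comp (Λ.comp f.1 g.1) h.1 = Λ.comp h2.1 (Λ.comp g2.1 f2.1) := by
      rw [Λ.comp_assoc _ _ _ hsfg' hsgh', e4, ← Λ.comp_assoc _ _ _ sc5 sd4, e5,
        Λ.comp_assoc _ _ _ sd5 sc6, e6]
    -- colours
    have cf2 : (skel Λ).c f2 = (skel Λ).c f := cr6.2.1.trans cr5.2.1
    have cf2' : (skel Λ).c f2' = (skel Λ).c f := cr2.2.1.trans cr1.2.1
    have cg2 : (skel Λ).c g2 = (skel Λ).c g := cr6.1.trans cr4.2.1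
    have cg2' : (skel Λ).c g2' = (skel Λ).c g := cr3.2.1.trans cr1.1
    have ch2 : (skel Λ).c h2 = (skel Λ).c h := cr5.1.trans cr4.1
    have ch2' : (skel Λ).c h2' = (skel Λ).c h := cr3.1.trans cr2.1
    -- degrees
    have dτ : Λ.d (Λ.comp (Λ.comp f.1 g.1) h.1) = Pi.single ((skel Λ).c h) 1 +
        (Pi.single ((skel Λ).c g) 1 + Pi.single ((skel Λ).c f) 1) := by
      rw [Λ.d_comp _ _ (by rw [Λ.src_comp _ _ hsfg']; exact hsgh'),
        Λ.d_comp _ _ hsfg', d_eq_c Λ f, d_eq_c Λ g, d_eq_c Λ h]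
      abel
    have dgf : Λ.d (Λ.comp g2.1 f2.1) =
        Pi.single ((skel Λ).c g) 1 + Pi.single ((skel Λ).c f) 1 := by
      rw [Λ.d_comp _ _ sd6, d_eq_c Λ g2, d_eq_c Λ f2, cg2, cf2]
    have dgf' : Λ.d (Λ.comp g2'.1 f2'.1) =
        Pi.single ((skel Λ).c g) 1 + Pi.single ((skel Λ).c f) 1 := by
      rw [Λ.d_comp _ _ sg2f2', d_eq_c Λ g2', d_eq_c Λ f2', cg2', cf2']
    have dh2 : Λ.d h2.1 = Pi.single ((skel Λ).c h) 1 := by rw [d_eq_c Λ h2, ch2]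
    have dh2' : Λ.d h2'.1 = Pi.single ((skel Λ).c h) 1 := by rw [d_eq_c Λ h2', ch2']
    have key1 := factor_unique dτ
      (by rw [Λ.rng_comp _ _ sd6]; exact sh2g2) P2.symm dh2 dgf
      (by rw [Λ.rng_comp _ _ sg2f2']; exact sd3) P1.symm dh2' dgf'
    have key2 := factor_unique dgf sd6 rfl
      (by rw [d_eq_c Λ g2, cg2]) (by rw [d_eq_c Λ f2, cf2])
      sg2f2' key1.2.symm (by rw [d_eq_c Λ g2', cg2']) (by rw [d_eq_c Λ f2', cf2'])
    exact ⟨Subtype.ext key2.2, Subtype.ext key2.1, Subtype.ext key1.1⟩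

end Paper
end
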